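/- arXiv:1011.3930 — 5 statements merged into one kernel-verified Lean document; each statement's English description precedes it below -/
import Mathlib

section
/- The number of circular binary words of length n ≥ 1 that avoid both the factor 00 and the factor 111 (cyclically) equals the Perrin number P(n), where P(0)=3, P(1)=0, P(2)=2 and P(n)=P(n-2)+P(n-3). -/
def DD (u : ℕ → Bool) : Prop :=
  ∀ k, ¬(u k = false ∧ u (k+1) = false) ∧
       ¬(u k = true ∧ u (k+1) = true ∧ u (k+2) = true)

def PW (m : ℕ) : Type := {u : ℕ → Bool // Function.Periodic u m ∧ DD u}

def pwEquiv (m : ℕ) [NeZero m] :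
    {w : ZMod m → Bool //
        (∀ i : ZMod m, ¬ (w i = false ∧ w (i + 1) = false)) ∧
        (∀ i : ZMod m, ¬ (w i = true ∧ w (i + 1) = true ∧ w (i + 2) = true))} ≃ PW m where
  toFun := fun ⟨w, h1, h2⟩ => ⟨fun k => w k, by
    intro k
    show w _ = w _
    congr 1
    push_cast
    simp, by
    intro k
    have e1 : ((k+1 : ℕ) : ZMod m) = (k : ZMod m) + 1 := by push_cast; ring
    have e2 : ((k+2 : ℕ) : ZMod m) = (k : ZMod m) + 2 := by push_cast; ring
    refine ⟨?_, ?_⟩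
    · have := h1 (k : ZMod m); simpa [e1] using this
    · have := h2 (k : ZMod m); simpa [e1, e2] using this⟩
  invFun := fun ⟨u, hp, hd⟩ => ⟨fun i => u i.val, by
    have hkey : ∀ j : ℕ, u ((j : ZMod m)).val = u j := by
      intro j; rw [ZMod.val_natCast]; exact hp.map_mod_nat j
    refine ⟨fun i => ?_, fun i => ?_⟩
    · have hi : ((i.val : ℕ) : ZMod m) = i := by rw [ZMod.natCast_val, ZMod.cast_id]
      have e1 : i + 1 = ((i.val + 1 : ℕ) : ZMod m) := by push_cast; rw [hi]
      have := (hd i.val).1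
      simpa only [e1, hkey] using this
    · have hi : ((i.val : ℕ) : ZMod m) = i := by rw [ZMod.natCast_val, ZMod.cast_id]
      have e1 : i + 1 = ((i.val + 1 : ℕ) : ZMod m) := by push_cast; rw [hi]
      have e2 : i + 2 = ((i.val + 2 : ℕ) : ZMod m) := by push_cast; rw [hi]
      have := (hd i.val).2
      simpa only [e1, e2, hkey] using this⟩
  left_inv := by
    rintro ⟨w, h1, h2⟩
    apply Subtype.ext
    funext i
    show w ((i.val : ℕ) : ZMod m) = w i
    congr 1
    rw [ZMod.natCast_val, ZMod.cast_id]
  right_inv := by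
    rintro ⟨u, hp, hd⟩
    apply Subtype.ext
    funext k
    show u ((k : ZMod m)).val = u k
    rw [ZMod.val_natCast]; exact hp.map_mod_nat k

instance pwFinite (m : ℕ) [NeZero m] : Finite (PW m) :=
  Finite.of_equiv _ (pwEquiv m)

def edel (n : ℕ) (u : ℕ → Bool) : ℕ → Bool := fun k =>
  if k % (n+1) < 2 then u (k % (n+1)) else u (k % (n+1) + 2)

def cdel (n : ℕ) (u : ℕ → Bool) : ℕ → Bool := fun k =>
  if k % n < 2 then u (k % n) else u (k % n + 3)

def ein (n : ℕ) (v : ℕ → Bool) : ℕ → Bool := fun k =>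
  if k % (n+3) = 0 then v 0 else if k % (n+3) = 1 then v 1
  else if k % (n+3) = 2 then !(v 1 && !(v 2))
  else if k % (n+3) = 3 then (v 1 && !(v 2))
  else v (k % (n+3) - 2)

def cin (n : ℕ) (v : ℕ → Bool) : ℕ → Bool := fun k =>
  if k % (n+3) = 0 then v 0 else if k % (n+3) = 1 then v 1
  else if k % (n+3) = 2 then v 2
  else if k % (n+3) = 3 then !(v 1 && v 2)
  else if k % (n+3) = 4 then v 1
  else v (k % (n+3) - 3)

-- self-mod lemmas
lemma edel_mod (n : ℕ) (u : ℕ → Bool) (j : ℕ) : edel n u j = edel n u (j % (n+1)) := by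
  simp [edel, Nat.mod_mod_of_dvd _ dvd_rfl]

lemma cdel_mod (n : ℕ) (u : ℕ → Bool) (j : ℕ) : cdel n u j = cdel n u (j % n) := by
  simp [cdel, Nat.mod_mod_of_dvd _ dvd_rfl]

lemma ein_mod (n : ℕ) (v : ℕ → Bool) (j : ℕ) : ein n v j = ein n v (j % (n+3)) := by
  simp [ein, Nat.mod_mod_of_dvd _ dvd_rfl]

lemma cin_mod (n : ℕ) (v : ℕ → Bool) (j : ℕ) : cin n v j = cin n v (j % (n+3)) := by
  simp [cin, Nat.mod_mod_of_dvd _ dvd_rfl]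

-- periodicity
lemma edel_per (n : ℕ) (u : ℕ → Bool) : Function.Periodic (edel n u) (n+1) := by
  intro k; simp [edel, Nat.add_mod_right]

lemma cdel_per (n : ℕ) (u : ℕ → Bool) : Function.Periodic (cdel n u) n := by
  intro k; simp [cdel, Nat.add_mod_right]

lemma ein_per (n : ℕ) (v : ℕ → Bool) : Function.Periodic (ein n v) (n+3) := by
  intro k; simp [ein, Nat.add_mod_right]

lemma cin_per (n : ℕ) (v : ℕ → Bool) : Function.Periodic (cin n v) (n+3) := by
  intro k; simp [cin, Nat.add_mod_right]

-- evaluation lemmas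
lemma edel_eval (n : ℕ) (u : ℕ → Bool) (j : ℕ) (hj : j < n+1) :
    edel n u j = if j < 2 then u j else u (j+2) := by
  simp [edel, Nat.mod_eq_of_lt hj]

lemma cdel_eval (n : ℕ) (u : ℕ → Bool) (j : ℕ) (hj : j < n) :
    cdel n u j = if j < 2 then u j else u (j+3) := by
  simp [cdel, Nat.mod_eq_of_lt hj]

lemma ein_eval (n : ℕ) (v : ℕ → Bool) (j : ℕ) (hj : j < n+3) :
    ein n v j = if j = 0 then v 0 else if j = 1 then v 1
      else if j = 2 then !(v 1 && !(v 2))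
      else if j = 3 then (v 1 && !(v 2)) else v (j - 2) := by
  simp [ein, Nat.mod_eq_of_lt hj]

lemma cin_eval (n : ℕ) (v : ℕ → Bool) (j : ℕ) (hj : j < n+3) :
    cin n v j = if j = 0 then v 0 else if j = 1 then v 1
      else if j = 2 then v 2 else if j = 3 then !(v 1 && v 2)
      else if j = 4 then v 1 else v (j - 3) := by
  simp [cin, Nat.mod_eq_of_lt hj]

-- locality
lemma DD_of_local {M : ℕ} (hM : 2 < M) (v : ℕ → Bool)
    (hv : ∀ j, v j = v (j % M))
    (H : ∀ r < M, ¬(v r = false ∧ v (r+1) = false) ∧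
        ¬(v r = true ∧ v (r+1) = true ∧ v (r+2) = true)) : DD v := by
  intro k
  have h1m : (1 : ℕ) % M = 1 := Nat.mod_eq_of_lt (by omega)
  have h2m : (2 : ℕ) % M = 2 := Nat.mod_eq_of_lt (by omega)
  have e1 : v (k+1) = v (k % M + 1) := by
    rw [hv (k+1), hv (k % M + 1), Nat.add_mod k 1 M, Nat.add_mod (k % M) 1 M,
      Nat.mod_mod_of_dvd _ dvd_rfl, h1m]
  have e2 : v (k+2) = v (k % M + 2) := by
    rw [hv (k+2), hv (k % M + 2), Nat.add_mod k 2 M, Nat.add_mod (k % M) 2 M,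
      Nat.mod_mod_of_dvd _ dvd_rfl, h2m]
  rw [hv k, e1, e2]
  exact H (k % M) (Nat.mod_lt _ (by omega))

lemma edel_valid (n : ℕ) (hn : 4 ≤ n) (u : ℕ → Bool)
    (hp : Function.Periodic u (n+3)) (hd : DD u)
    (hne : ¬ (u 4 = u 1 ∧ u 5 = u 2)) : DD (edel n u) := by
  apply DD_of_local (by omega) _ (edel_mod n u)
  have w3 : u (n+3) = u 0 := by simpa using hp 0
  have w4 : u (n+4) = u 1 := by
    have := hp 1; rwa [show 1 + (n+3) = n+4 from by omega] at this
  intro r hr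
  have hcase : r = 0 ∨ r = 1 ∨ (2 ≤ r ∧ r + 2 ≤ n) ∨ n = r + 1 ∨ n = r := by omega
  rcases hcase with rfl | rfl | ⟨h2, h2'⟩ | rfl | rfl
  · rw [edel_eval n u 0 (by omega), edel_eval n u 1 (by omega), edel_eval n u 2 (by omega)]
    norm_num
    have d0 := hd 0; have d1 := hd 1; have d2 := hd 2; have d3 := hd 3; have d4 := hd 4
    cases e0 : u 0 <;> cases e1 : u 1 <;> cases e2 : u 2 <;> cases e3 : u 3 <;>
      cases e4 : u 4 <;> cases e5 : u 5 <;> simp_all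
  · rw [edel_eval n u 1 (by omega), edel_eval n u 2 (by omega), edel_eval n u 3 (by omega)]
    norm_num
    have d0 := hd 0; have d1 := hd 1; have d2 := hd 2; have d3 := hd 3; have d4 := hd 4
    cases e1 : u 1 <;> cases e2 : u 2 <;> cases e3 : u 3 <;>
      cases e4 : u 4 <;> cases e5 : u 5 <;> simp_all
  · rw [edel_eval n u r (by omega), edel_eval n u (r+1) (by omega),
      edel_eval n u (r+2) (by omega),
      if_neg (by omega : ¬ r < 2), if_neg (by omega : ¬ r+1 < 2), if_neg (by omega : ¬ r+2 < 2)]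
    have := hd (r+2)
    rwa [show r+2+1 = r+1+2 from by omega] at this
  · -- n = r + 1
    rw [edel_mod (r+1) u (r+2), show (r+2) % (r+1+1) = 0 from by
      rw [show r+1+1 = r+2 from by omega]; exact Nat.mod_self _]
    rw [edel_eval (r+1) u r (by omega), edel_eval (r+1) u (r+1) (by omega),
      edel_eval (r+1) u 0 (by omega),
      if_neg (by omega : ¬ r < 2), if_neg (by omega : ¬ r+1 < 2), if_pos (by omega : (0:ℕ) < 2)]
    have := hd (r+2)
    rwa [show r+2+1 = r+1+2 from by omega, show r+2+2 = r+1+3 from by omega, w3] at this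
  · -- r = n
    rw [edel_mod n u (n+1), show (n+1) % (n+1) = 0 from Nat.mod_self _,
      edel_mod n u (n+2), show (n+2) % (n+1) = 1 from by
        rw [show n+2 = 1 + (n+1) from by omega, Nat.add_mod_right]
        exact Nat.mod_eq_of_lt (by omega)]
    rw [edel_eval n u n (by omega), edel_eval n u 0 (by omega), edel_eval n u 1 (by omega),
      if_neg (by omega : ¬ n < 2), if_pos (by omega : (0:ℕ) < 2), if_pos (by omega : (1:ℕ) < 2)]
    have := hd (n+2)
    rwa [show n+2+1 = n+3 from by omega, show n+2+2 = n+4 from by omega, w3, w4] at this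

lemma cdel_valid (n : ℕ) (hn : 4 ≤ n) (u : ℕ → Bool)
    (hp : Function.Periodic u (n+3)) (hd : DD u)
    (hc : u 4 = u 1 ∧ u 5 = u 2) : DD (cdel n u) := by
  apply DD_of_local (by omega) _ (cdel_mod n u)
  have w3 : u (n+3) = u 0 := by simpa using hp 0
  have w4 : u (n+4) = u 1 := by
    have := hp 1; rwa [show 1 + (n+3) = n+4 from by omega] at this
  obtain ⟨hc4, hc5⟩ := hc
  intro r hr
  have hcase : r = 0 ∨ r = 1 ∨ (2 ≤ r ∧ r + 3 ≤ n) ∨ n = r + 2 ∨ n = r + 1 := by omega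
  rcases hcase with rfl | rfl | ⟨h2, h2'⟩ | rfl | rfl
  · rw [cdel_eval n u 0 (by omega), cdel_eval n u 1 (by omega), cdel_eval n u 2 (by omega),
      if_pos (by omega : (0:ℕ) < 2), if_pos (by omega : (1:ℕ) < 2), if_neg (by omega : ¬ (2:ℕ) < 2)]
    have := hd 0
    rwa [show (0:ℕ)+1 = 1 from rfl, show (0:ℕ)+2 = 2 from rfl, ← hc5] at this
  · rw [cdel_eval n u 1 (by omega), cdel_eval n u 2 (by omega), cdel_eval n u 3 (by omega),
      if_pos (by omega : (1:ℕ) < 2), if_neg (by omega : ¬ (2:ℕ) < 2), if_neg (by omega : ¬ (3:ℕ) < 2)]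
    constructor
    · rintro ⟨a, b⟩
      exact (hd 1).1 ⟨a, by rw [← hc5]; exact b⟩
    · rintro ⟨a, b, c⟩
      exact (hd 4).2 ⟨hc4.trans a, b, c⟩
  · rw [cdel_eval n u r (by omega), cdel_eval n u (r+1) (by omega),
      cdel_eval n u (r+2) (by omega),
      if_neg (by omega : ¬ r < 2), if_neg (by omega : ¬ r+1 < 2), if_neg (by omega : ¬ r+2 < 2)]
    have := hd (r+3)
    rwa [show r+3+1 = r+1+3 from by omega, show r+3+2 = r+2+3 from by omega] at this
  · -- n = r + 2
    rw [cdel_mod (r+2) u (r+2), show (r+2) % (r+2) = 0 from Nat.mod_self _]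
    rw [cdel_eval (r+2) u r (by omega), cdel_eval (r+2) u (r+1) (by omega),
      cdel_eval (r+2) u 0 (by omega),
      if_neg (by omega : ¬ r < 2), if_neg (by omega : ¬ r+1 < 2), if_pos (by omega : (0:ℕ) < 2)]
    have := hd (r+3)
    rwa [show r+3+1 = r+1+3 from by omega, show r+3+2 = r+2+3 from by omega,
      show r+2+3 = r+2+3 from rfl, show r+2+3 = (r+2)+3 from rfl, w3] at this
  · -- n = r + 1
    rw [cdel_mod (r+1) u (r+1), show (r+1) % (r+1) = 0 from Nat.mod_self _,
      cdel_mod (r+1) u (r+2), show (r+2) % (r+1) = 1 from by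
        rw [show r+2 = 1 + (r+1) from by omega, Nat.add_mod_right]
        exact Nat.mod_eq_of_lt (by omega)]
    rw [cdel_eval (r+1) u r (by omega), cdel_eval (r+1) u 0 (by omega),
      cdel_eval (r+1) u 1 (by omega),
      if_neg (by omega : ¬ r < 2), if_pos (by omega : (0:ℕ) < 2), if_pos (by omega : (1:ℕ) < 2)]
    have := hd (r+3)
    rwa [show r+3+1 = r+1+3 from by omega, show r+3+2 = r+1+4 from by omega,
      show r+1+3 = (r+1)+3 from rfl, show r+1+4 = (r+1)+4 from rfl, w3, w4] at this

lemma ein_eval_ge (n : ℕ) (v : ℕ → Bool) (j : ℕ) (h4 : 4 ≤ j) (hj : j < n+3) :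
    ein n v j = v (j-2) := by
  rw [ein_eval n v j hj, if_neg (by omega), if_neg (by omega), if_neg (by omega),
    if_neg (by omega)]

lemma cin_eval_ge (n : ℕ) (v : ℕ → Bool) (j : ℕ) (h4 : 5 ≤ j) (hj : j < n+3) :
    cin n v j = v (j-3) := by
  rw [cin_eval n v j hj, if_neg (by omega), if_neg (by omega), if_neg (by omega),
    if_neg (by omega), if_neg (by omega)]

lemma ein_valid (n : ℕ) (hn : 4 ≤ n) (v : ℕ → Bool)
    (hp : Function.Periodic v (n+1)) (hd : DD v) : DD (ein n v) := by
  apply DD_of_local (by omega) _ (ein_mod n v)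
  have wv : v (n+1) = v 0 := by simpa using hp 0
  have wv2 : v (n+2) = v 1 := by
    have := hp 1; rwa [show 1 + (n+1) = n+2 from by omega] at this
  intro r hr
  have hcase : r = 0 ∨ r = 1 ∨ r = 2 ∨ r = 3 ∨ (4 ≤ r ∧ r ≤ n) ∨ r = n+1 ∨ r = n+2 := by
    omega
  rcases hcase with rfl | rfl | rfl | rfl | ⟨h4, h4'⟩ | rfl | rfl
  · rw [ein_eval n v 0 (by omega), ein_eval n v 1 (by omega), ein_eval n v 2 (by omega)]
    have d0 := hd 0; have d1 := hd 1
    cases e0 : v 0 <;> cases e1 : v 1 <;> cases e2 : v 2 <;> simp_all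
  · rw [ein_eval n v 1 (by omega), ein_eval n v 2 (by omega), ein_eval n v 3 (by omega)]
    have d0 := hd 0; have d1 := hd 1
    cases e1 : v 1 <;> cases e2 : v 2 <;> simp_all
  · rw [ein_eval n v 2 (by omega), ein_eval n v 3 (by omega),
      ein_eval_ge n v 4 (by omega) (by omega)]
    have d1 := hd 1; have d2 := hd 2
    cases e1 : v 1 <;> cases e2 : v 2 <;> simp_all
  · rw [ein_eval n v 3 (by omega), ein_eval_ge n v 4 (by omega) (by omega),
      ein_eval_ge n v 5 (by omega) (by omega)]
    have d1 := hd 1; have d2 := hd 2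
    cases e1 : v 1 <;> cases e2 : v 2 <;> cases e3 : v 3 <;> simp_all
  · obtain ⟨s, rfl⟩ : ∃ s, r = s + 4 := ⟨r - 4, by omega⟩
    rw [ein_eval_ge n v (s+4) (by omega) (by omega),
      ein_eval_ge n v (s+4+1) (by omega) (by omega),
      ein_eval_ge n v (s+4+2) (by omega) (by omega),
      show s+4-2 = s+2 from by omega, show s+4+1-2 = s+2+1 from by omega,
      show s+4+2-2 = s+2+2 from by omega]
    exact hd (s+2)
  · obtain ⟨s, rfl⟩ : ∃ s, n = s + 4 := ⟨n - 4, by omega⟩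
    rw [show s+4+1 = s+5 from by omega]
    rw [ein_eval_ge (s+4) v (s+5) (by omega) (by omega),
      ein_eval_ge (s+4) v (s+5+1) (by omega) (by omega),
      ein_mod (s+4) v (s+5+2), show (s+5+2) % (s+4+3) = 0 from by
        rw [show s+4+3 = s+5+2 from by omega]; exact Nat.mod_self _,
      ein_eval (s+4) v 0 (by omega), if_pos rfl,
      show s+5-2 = s+3 from by omega, show s+5+1-2 = s+3+1 from by omega, ← wv]
    have := hd (s+3)
    rwa [show s+3+2 = s+4+1 from by omega] at this
  · obtain ⟨s, rfl⟩ : ∃ s, n = s + 4 := ⟨n - 4, by omega⟩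
    rw [show s+4+2 = s+6 from by omega]
    rw [ein_eval_ge (s+4) v (s+6) (by omega) (by omega),
      ein_mod (s+4) v (s+6+1), show (s+6+1) % (s+4+3) = 0 from by
        rw [show s+4+3 = s+6+1 from by omega]; exact Nat.mod_self _,
      ein_mod (s+4) v (s+6+2), show (s+6+2) % (s+4+3) = 1 from by
        rw [show s+6+2 = 1 + (s+4+3) from by omega, Nat.add_mod_right]
        exact Nat.mod_eq_of_lt (by omega),
      ein_eval (s+4) v 0 (by omega), if_pos rfl,
      ein_eval (s+4) v 1 (by omega), if_neg (by omega), if_pos rfl,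
      show s+6-2 = s+4 from by omega, ← wv, ← wv2]
    have := hd (s+4)
    rwa [show s+4+2 = s+4+2 from rfl] at this

lemma cin_valid (n : ℕ) (hn : 4 ≤ n) (v : ℕ → Bool)
    (hp : Function.Periodic v n) (hd : DD v) : DD (cin n v) := by
  apply DD_of_local (by omega) _ (cin_mod n v)
  have wv : v n = v 0 := by simpa using hp 0
  have wv2 : v (n+1) = v 1 := by
    have := hp 1; rwa [show 1 + n = n+1 from by omega] at this
  intro r hr
  have hcase : r = 0 ∨ r = 1 ∨ r = 2 ∨ r = 3 ∨ r = 4 ∨ (5 ≤ r ∧ r ≤ n) ∨ r = n+1 ∨ r = n+2 := by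
    omega
  rcases hcase with rfl | rfl | rfl | rfl | rfl | ⟨h5, h5'⟩ | rfl | rfl
  · rw [cin_eval n v 0 (by omega), cin_eval n v 1 (by omega), cin_eval n v 2 (by omega)]
    have d0 := hd 0
    cases e0 : v 0 <;> cases e1 : v 1 <;> cases e2 : v 2 <;> simp_all
  · rw [cin_eval n v 1 (by omega), cin_eval n v 2 (by omega), cin_eval n v 3 (by omega)]
    have d1 := hd 1
    cases e1 : v 1 <;> cases e2 : v 2 <;> simp_all
  · rw [cin_eval n v 2 (by omega), cin_eval n v 3 (by omega), cin_eval n v 4 (by omega)]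
    have d1 := hd 1
    cases e1 : v 1 <;> cases e2 : v 2 <;> simp_all
  · rw [cin_eval n v 3 (by omega), cin_eval n v 4 (by omega),
      cin_eval_ge n v 5 (by omega) (by omega)]
    have d1 := hd 1
    cases e1 : v 1 <;> cases e2 : v 2 <;> simp_all
  · rw [cin_eval n v 4 (by omega), cin_eval_ge n v 5 (by omega) (by omega),
      cin_eval_ge n v 6 (by omega) (by omega)]
    have d1 := hd 1
    cases e1 : v 1 <;> cases e2 : v 2 <;> cases e3 : v 3 <;> simp_all
  · obtain ⟨s, rfl⟩ : ∃ s, r = s + 5 := ⟨r - 5, by omega⟩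
    rw [cin_eval_ge n v (s+5) (by omega) (by omega),
      cin_eval_ge n v (s+5+1) (by omega) (by omega),
      cin_eval_ge n v (s+5+2) (by omega) (by omega),
      show s+5-3 = s+2 from by omega, show s+5+1-3 = s+2+1 from by omega,
      show s+5+2-3 = s+2+2 from by omega]
    exact hd (s+2)
  · obtain ⟨s, rfl⟩ : ∃ s, n = s + 4 := ⟨n - 4, by omega⟩
    rw [show s+4+1 = s+5 from by omega]
    rw [cin_eval_ge (s+4) v (s+5) (by omega) (by omega),
      cin_eval_ge (s+4) v (s+5+1) (by omega) (by omega),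
      cin_mod (s+4) v (s+5+2), show (s+5+2) % (s+4+3) = 0 from by
        rw [show s+4+3 = s+5+2 from by omega]; exact Nat.mod_self _,
      cin_eval (s+4) v 0 (by omega), if_pos rfl,
      show s+5-3 = s+2 from by omega, show s+5+1-3 = s+2+1 from by omega, ← wv]
    have := hd (s+2)
    rwa [show s+2+2 = s+4 from by omega] at this
  · obtain ⟨s, rfl⟩ : ∃ s, n = s + 4 := ⟨n - 4, by omega⟩
    rw [show s+4+2 = s+6 from by omega]
    rw [cin_eval_ge (s+4) v (s+6) (by omega) (by omega),
      cin_mod (s+4) v (s+6+1), show (s+6+1) % (s+4+3) = 0 from by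
        rw [show s+4+3 = s+6+1 from by omega]; exact Nat.mod_self _,
      cin_mod (s+4) v (s+6+2), show (s+6+2) % (s+4+3) = 1 from by
        rw [show s+6+2 = 1 + (s+4+3) from by omega, Nat.add_mod_right]
        exact Nat.mod_eq_of_lt (by omega),
      cin_eval (s+4) v 0 (by omega), if_pos rfl,
      cin_eval (s+4) v 1 (by omega), if_neg (by omega), if_pos rfl,
      show s+6-3 = s+3 from by omega, ← wv, ← wv2]
    have := hd (s+3)
    rwa [show s+3+1 = s+4 from by omega, show s+3+2 = s+4+1 from by omega] at this

lemma cin_cdel (n : ℕ) (hn : 4 ≤ n) (u : ℕ → Bool)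
    (hp : Function.Periodic u (n+3)) (hd : DD u)
    (hc : u 4 = u 1 ∧ u 5 = u 2) : cin n (cdel n u) = u := by
  funext k
  rw [cin_mod, ← hp.map_mod_nat k]
  set r := k % (n+3) with hrdef
  have hr : r < n+3 := Nat.mod_lt _ (by omega)
  clear_value r
  have hcase : r = 0 ∨ r = 1 ∨ r = 2 ∨ r = 3 ∨ r = 4 ∨ (5 ≤ r ∧ r ≤ n+2) := by omega
  rcases hcase with rfl | rfl | rfl | rfl | rfl | ⟨h5, h5'⟩
  · rw [cin_eval n _ 0 (by omega), if_pos rfl, cdel_eval n u 0 (by omega),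
      if_pos (by omega : (0:ℕ) < 2)]
  · rw [cin_eval n _ 1 (by omega), if_neg (by omega), if_pos rfl,
      cdel_eval n u 1 (by omega), if_pos (by omega : (1:ℕ) < 2)]
  · rw [cin_eval n _ 2 (by omega), if_neg (by omega), if_neg (by omega), if_pos rfl,
      cdel_eval n u 2 (by omega), if_neg (by omega)]
    exact hc.2
  · rw [cin_eval n _ 3 (by omega), if_neg (by omega), if_neg (by omega), if_neg (by omega),
      if_pos rfl, cdel_eval n u 1 (by omega), if_pos (by omega : (1:ℕ) < 2),
      cdel_eval n u 2 (by omega), if_neg (by omega)]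
    have d0 := hd 0; have d1 := hd 1; have d2 := hd 2; have d3 := hd 3
    obtain ⟨hc4, hc5⟩ := hc
    clear hp hrdef hd
    cases e1 : u 1 <;> cases e2 : u 2 <;> cases e3 : u 3 <;> cases e4 : u 4 <;>
      cases e5 : u 5 <;> simp_all
  · rw [cin_eval n _ 4 (by omega), if_neg (by omega), if_neg (by omega), if_neg (by omega),
      if_neg (by omega), if_pos rfl, cdel_eval n u 1 (by omega), if_pos (by omega : (1:ℕ) < 2)]
    exact hc.1.symm
  · obtain ⟨s, rfl⟩ : ∃ s, r = s + 5 := ⟨r - 5, by omega⟩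
    rw [cin_eval_ge n _ (s+5) (by omega) (by omega), show s+5-3 = s+2 from by omega,
      cdel_eval n u (s+2) (by omega), if_neg (by omega)]

lemma ein_edel (n : ℕ) (hn : 4 ≤ n) (u : ℕ → Bool)
    (hp : Function.Periodic u (n+3)) (hd : DD u)
    (hne : ¬(u 4 = u 1 ∧ u 5 = u 2)) : ein n (edel n u) = u := by
  funext k
  rw [ein_mod, ← hp.map_mod_nat k]
  set r := k % (n+3) with hrdef
  have hr : r < n+3 := Nat.mod_lt _ (by omega)
  clear_value r
  have hcase : r = 0 ∨ r = 1 ∨ r = 2 ∨ r = 3 ∨ (4 ≤ r ∧ r ≤ n+2) := by omega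
  rcases hcase with rfl | rfl | rfl | rfl | ⟨h4, h4'⟩
  · rw [ein_eval n _ 0 (by omega), if_pos rfl, edel_eval n u 0 (by omega),
      if_pos (by omega : (0:ℕ) < 2)]
  · rw [ein_eval n _ 1 (by omega), if_neg (by omega), if_pos rfl,
      edel_eval n u 1 (by omega), if_pos (by omega : (1:ℕ) < 2)]
  · rw [ein_eval n _ 2 (by omega), if_neg (by omega), if_neg (by omega), if_pos rfl,
      edel_eval n u 1 (by omega), if_pos (by omega : (1:ℕ) < 2),
      edel_eval n u 2 (by omega), if_neg (by omega)]
    have d0 := hd 0; have d1 := hd 1; have d2 := hd 2; have d3 := hd 3; have d4 := hd 4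
    clear hp hrdef hd
    cases e1 : u 1 <;> cases e2 : u 2 <;> cases e3 : u 3 <;> cases e4 : u 4 <;>
      cases e5 : u 5 <;> simp_all
  · rw [ein_eval n _ 3 (by omega), if_neg (by omega), if_neg (by omega), if_neg (by omega),
      if_pos rfl, edel_eval n u 1 (by omega), if_pos (by omega : (1:ℕ) < 2),
      edel_eval n u 2 (by omega), if_neg (by omega)]
    have d0 := hd 0; have d1 := hd 1; have d2 := hd 2; have d3 := hd 3; have d4 := hd 4
    clear hp hrdef hd
    cases e1 : u 1 <;> cases e2 : u 2 <;> cases e3 : u 3 <;> cases e4 : u 4 <;>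
      cases e5 : u 5 <;> simp_all
  · obtain ⟨s, rfl⟩ : ∃ s, r = s + 4 := ⟨r - 4, by omega⟩
    rw [ein_eval_ge n _ (s+4) (by omega) (by omega), show s+4-2 = s+2 from by omega,
      edel_eval n u (s+2) (by omega), if_neg (by omega)]

lemma edel_ein (n : ℕ) (hn : 4 ≤ n) (v : ℕ → Bool)
    (hp : Function.Periodic v (n+1)) (hd : DD v) : edel n (ein n v) = v := by
  funext k
  rw [edel_mod, ← hp.map_mod_nat k]
  set r := k % (n+1) with hrdef
  have hr : r < n+1 := Nat.mod_lt _ (by omega)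
  clear_value r
  rw [edel_eval n _ r hr]
  by_cases h2 : r < 2
  · rw [if_pos h2]
    have hcase : r = 0 ∨ r = 1 := by omega
    rcases hcase with rfl | rfl
    · rw [ein_eval n v 0 (by omega), if_pos rfl]
    · rw [ein_eval n v 1 (by omega), if_neg (by omega), if_pos rfl]
  · rw [if_neg h2, ein_eval_ge n v (r+2) (by omega) (by omega),
      show r+2-2 = r from by omega]

lemma cdel_cin (n : ℕ) (hn : 4 ≤ n) (v : ℕ → Bool)
    (hp : Function.Periodic v n) (hd : DD v) : cdel n (cin n v) = v := by
  funext k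
  rw [cdel_mod, ← hp.map_mod_nat k]
  set r := k % n with hrdef
  have hr : r < n := Nat.mod_lt _ (by omega)
  clear_value r
  rw [cdel_eval n _ r hr]
  by_cases h2 : r < 2
  · rw [if_pos h2]
    have hcase : r = 0 ∨ r = 1 := by omega
    rcases hcase with rfl | rfl
    · rw [cin_eval n v 0 (by omega), if_pos rfl]
    · rw [cin_eval n v 1 (by omega), if_neg (by omega), if_pos rfl]
  · rw [if_neg h2, cin_eval_ge n v (r+3) (by omega) (by omega),
      show r+3-3 = r from by omega]

lemma ein_class (n : ℕ) (hn : 4 ≤ n) (v : ℕ → Bool)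
    (hp : Function.Periodic v (n+1)) (hd : DD v) :
    ¬((ein n v) 4 = (ein n v) 1 ∧ (ein n v) 5 = (ein n v) 2) := by
  rw [ein_eval_ge n v 4 (by omega) (by omega), ein_eval_ge n v 5 (by omega) (by omega),
    ein_eval n v 1 (by omega), if_neg (by omega), if_pos rfl,
    ein_eval n v 2 (by omega), if_neg (by omega), if_neg (by omega), if_pos rfl]
  norm_num
  have d0 := hd 0; have d1 := hd 1
  cases e1 : v 1 <;> cases e2 : v 2 <;> cases e3 : v 3 <;> simp_all

lemma cin_class (n : ℕ) (hn : 4 ≤ n) (v : ℕ → Bool) :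
    (cin n v) 4 = (cin n v) 1 ∧ (cin n v) 5 = (cin n v) 2 := by
  rw [cin_eval n v 4 (by omega), if_neg (by omega), if_neg (by omega), if_neg (by omega),
    if_neg (by omega), if_pos rfl,
    cin_eval n v 1 (by omega), if_neg (by omega), if_pos rfl,
    cin_eval_ge n v 5 (by omega) (by omega),
    cin_eval n v 2 (by omega), if_neg (by omega), if_neg (by omega), if_pos rfl]
  exact ⟨rfl, rfl⟩

def bigE (n : ℕ) (hn : 4 ≤ n) : PW (n+3) ≃ PW (n+1) ⊕ PW n where
  toFun x :=
    if h : x.1 4 = x.1 1 ∧ x.1 5 = x.1 2 then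
      Sum.inr ⟨cdel n x.1, cdel_per n x.1, cdel_valid n hn x.1 x.2.1 x.2.2 h⟩
    else Sum.inl ⟨edel n x.1, edel_per n x.1, edel_valid n hn x.1 x.2.1 x.2.2 h⟩
  invFun y := Sum.elim
    (fun v => ⟨ein n v.1, ein_per n v.1, ein_valid n hn v.1 v.2.1 v.2.2⟩)
    (fun v => ⟨cin n v.1, cin_per n v.1, cin_valid n hn v.1 v.2.1 v.2.2⟩) y
  left_inv x := by
    by_cases h : x.1 4 = x.1 1 ∧ x.1 5 = x.1 2
    · simp only [dif_pos h, Sum.elim_inr]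
      exact Subtype.ext (cin_cdel n hn x.1 x.2.1 x.2.2 h)
    · simp only [dif_neg h, Sum.elim_inl]
      exact Subtype.ext (ein_edel n hn x.1 x.2.1 x.2.2 h)
  right_inv y := by
    rcases y with v | v
    · simp only [Sum.elim_inl]
      change (if h : ein n v.1 4 = ein n v.1 1 ∧ ein n v.1 5 = ein n v.1 2 then _ else _) = _
      rw [dif_neg (ein_class n hn v.1 v.2.1 v.2.2)]
      exact congrArg Sum.inl (Subtype.ext (edel_ein n hn v.1 v.2.1 v.2.2))
    · simp only [Sum.elim_inr]
      change (if h : cin n v.1 4 = cin n v.1 1 ∧ cin n v.1 5 = cin n v.1 2 then _ else _) = _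
      rw [dif_pos (cin_class n hn v.1)]
      exact congrArg Sum.inr (Subtype.ext (cdel_cin n hn v.1 v.2.1 v.2.2))


def perrin : ℕ → ℕ
  | 0 => 3
  | 1 => 0
  | 2 => 2
  | (n + 3) => perrin (n + 1) + perrin n

lemma pw_card (m : ℕ) : 1 ≤ m → Nat.card (PW m) = perrin m := by
  induction m using Nat.strong_induction_on with
  | _ m ih =>
    intro hm
    by_cases hle : m ≤ 6
    · interval_cases m
      · rw [← Nat.card_congr (pwEquiv 1), Nat.card_eq_fintype_card]; decide
      · rw [← Nat.card_congr (pwEquiv 2), Nat.card_eq_fintype_card]; decide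
      · rw [← Nat.card_congr (pwEquiv 3), Nat.card_eq_fintype_card]; decide
      · rw [← Nat.card_congr (pwEquiv 4), Nat.card_eq_fintype_card]; decide
      · rw [← Nat.card_congr (pwEquiv 5), Nat.card_eq_fintype_card]; decide
      · rw [← Nat.card_congr (pwEquiv 6), Nat.card_eq_fintype_card]; decide
    · obtain ⟨k, rfl⟩ : ∃ k, m = k + 3 := ⟨m - 3, by omega⟩
      have hk : 4 ≤ k := by omega
      haveI : NeZero k := ⟨by omega⟩
      rw [Nat.card_congr (bigE k hk), Nat.card_sum,
        ih (k+1) (by omega) (by omega), ih k (by omega) (by omega), perrin]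

theorem circular_words_avoiding_00_111 (n : ℕ) (hn : 1 ≤ n) :
    Nat.card {w : ZMod n → Bool //
        (∀ i : ZMod n, ¬ (w i = false ∧ w (i + 1) = false)) ∧
        (∀ i : ZMod n, ¬ (w i = true ∧ w (i + 1) = true ∧ w (i + 2) = true))}
      = perrin n := by
  haveI : NeZero n := ⟨by omega⟩
  exact (Nat.card_congr (pwEquiv n)).trans (pw_card n hn)
end

section
/- Let p ≥ 1, d with 1 ≤ d < p, and let Δ = gcd(d,p). The set of circular binary words w of length p (functions ZMod p → {0,1}) that contain no occurrence of a pattern 0u0 with |u| = d-1 (i.e., there is no index i with w(i) = 0 and w(i+d) = 0) has cardinality L(p/Δ)^Δ, where L is the Lucas sequence L(1)=1, L(2)=3, L(n)=L(n-1)+L(n-2). -/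
def lucas : ℕ → ℕ
  | 0 => 2
  | 1 => 1
  | (n + 2) => lucas (n + 1) + lucas n

namespace CircAux

def R (a b : Bool) : Prop := a = true ∨ b = true

instance : DecidableRel R := fun _ _ => inferInstanceAs (Decidable (_ ∨ _))

lemma R_true_left (b : Bool) : R true b := Or.inl rfl
lemma R_true_right (a : Bool) : R a true := Or.inr rfl

def G : ℕ → Finset (List Bool)
  | 0 => {[]}
  | 1 => {[true], [false]}
  | n + 2 => ((G (n+1)).image (true :: ·)) ∪ ((G n).image (fun l => false :: true :: l))

lemma mem_G : ∀ (n : ℕ) (l : List Bool), l ∈ G n ↔ l.length = n ∧ l.Chain' R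
  | 0, l => by
    simp only [G, Finset.mem_singleton]
    constructor
    · rintro rfl; simp [List.Chain']
    · rintro ⟨h, -⟩; exact List.length_eq_zero_iff.mp h
  | 1, l => by
    simp only [G, Finset.mem_insert, Finset.mem_singleton]
    constructor
    · rintro (rfl | rfl) <;> simp [List.Chain']
    · rintro ⟨h, -⟩
      obtain ⟨a, rfl⟩ := List.length_eq_one_iff.mp h
      cases a <;> simp
  | n + 2, l => by
    simp only [G, Finset.mem_union, Finset.mem_image]
    constructor
    · rintro (⟨t, ht, rfl⟩ | ⟨t, ht, rfl⟩)
      · obtain ⟨hlen, hch⟩ := (mem_G (n+1) t).mp ht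
        refine ⟨by simp [hlen], ?_⟩
        rw [List.Chain', List.isChain_cons]
        exact ⟨fun y _ => R_true_left y, hch⟩
      · obtain ⟨hlen, hch⟩ := (mem_G n t).mp ht
        refine ⟨by simp [hlen], ?_⟩
        rw [List.Chain', List.isChain_cons]
        refine ⟨fun y hy => by simp at hy; rw [hy]; exact R_true_right _, ?_⟩
        rw [List.isChain_cons]
        exact ⟨fun y _ => R_true_left y, hch⟩
    · rintro ⟨hlen, hch⟩
      match l with
      | true :: t =>
          left
          exact ⟨t, (mem_G (n+1) t).mpr ⟨by simpa using hlen, hch.tail⟩, rfl⟩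
      | false :: t =>
          right
          match t, hlen with
          | b :: t, hlen =>
            rw [List.Chain', List.isChain_cons_cons] at hch
            obtain ⟨hr, hch⟩ := hch
            have hb : b = true := hr.resolve_left (by simp)
            subst hb
            exact ⟨t, (mem_G n t).mpr ⟨by simpa using hlen, hch.tail⟩, rfl⟩

lemma card_G : ∀ n : ℕ, (G n).card = Nat.fib (n + 2)
  | 0 => by simp [G]
  | 1 => by simp [G]; decide
  | n + 2 => by
    have hdisj : Disjoint ((G (n+1)).image (true :: ·))
        ((G n).image (fun l => false :: true :: l)) := by
      rw [Finset.disjoint_left]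
      intro a ha hb
      simp only [Finset.mem_image] at ha hb
      obtain ⟨t, -, rfl⟩ := ha
      obtain ⟨s, -, h⟩ := hb
      simp at h
    rw [G, Finset.card_union_of_disjoint hdisj,
      Finset.card_image_of_injective _ (fun a b h => by simpa using h),
      Finset.card_image_of_injective _ (fun a b h => by simpa using h),
      card_G (n+1), card_G n]
    have h3 : Nat.fib (n+1+2) = Nat.fib (n+1) + Nat.fib (n+1+1) := Nat.fib_add_two
    have h4 : Nat.fib (n+2+2) = Nat.fib (n+2) + Nat.fib (n+2+1) := Nat.fib_add_two
    have e1 : Nat.fib (n+2+1) = Nat.fib (n+1+2) := rfl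
    have e2 : Nat.fib (n+1+1) = Nat.fib (n+2) := rfl
    omega

lemma lucas_eq : ∀ n : ℕ, lucas (n + 1) = Nat.fib (n + 2) + Nat.fib n
  | 0 => by decide
  | 1 => by decide
  | n + 2 => by
    rw [lucas, lucas_eq (n+1), lucas_eq n]
    have h3 : Nat.fib (n+1+2) = Nat.fib (n+1) + Nat.fib (n+1+1) := Nat.fib_add_two
    have h4 : Nat.fib (n+2+2) = Nat.fib (n+2) + Nat.fib (n+2+1) := Nat.fib_add_two
    have h2 : Nat.fib (n+2) = Nat.fib n + Nat.fib (n+1) := Nat.fib_add_two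
    have e1 : Nat.fib (n+2+1) = Nat.fib (n+1+2) := rfl
    have e2 : Nat.fib (n+1+1) = Nat.fib (n+2) := rfl
    omega

end CircAux

namespace CircAux

def CyGood (l : List Bool) : Prop :=
  l.Chain' R ∧ ∀ (h : l ≠ []), R (l.getLast h) (l.head h)

def T (k : ℕ) : Finset (List Bool) :=
  (G (k+2)).image (true :: ·) ∪ (G k).image (fun t => false :: true :: (t ++ [true]))

lemma mem_T (k : ℕ) (l : List Bool) :
    l ∈ T k ↔ l.length = k + 3 ∧ CyGood l := by
  simp only [T, Finset.mem_union, Finset.mem_image]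
  constructor
  · rintro (⟨t, ht, rfl⟩ | ⟨s, hs, rfl⟩)
    · obtain ⟨hlen, hch⟩ := (mem_G _ t).mp ht
      refine ⟨by simp [hlen], ?_, fun h => R_true_right _⟩
      rw [List.Chain', List.isChain_cons]
      exact ⟨fun y _ => R_true_left y, hch⟩
    · obtain ⟨hlen, hch⟩ := (mem_G _ s).mp hs
      refine ⟨by simp [hlen], ?_, ?_⟩
      · rw [List.Chain', List.isChain_cons_cons]
        refine ⟨R_true_right _, ?_⟩
        rw [List.isChain_cons]
        refine ⟨fun y _ => R_true_left y, ?_⟩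
        rw [List.isChain_append]
        refine ⟨hch, List.isChain_singleton _, ?_⟩
        intro x _ y hy
        simp only [List.head?_cons, Option.mem_def, Option.some.injEq] at hy
        rw [← hy]
        exact R_true_right _
      · intro h
        have : (false :: true :: (s ++ [true])).getLast h = true := by
          rw [List.getLast_eq_iff_getLast?_eq_some,
            show false :: true :: (s ++ [true]) = (false :: true :: s) ++ [true] from by simp,
            List.getLast?_concat]
        rw [this]
        exact R_true_left _
  · rintro ⟨hlen, hch, hcyc⟩
    match l with
    | true :: t =>
      left
      exact ⟨t, (mem_G _ t).mpr ⟨by simpa using hlen, hch.tail⟩, rfl⟩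
    | false :: b :: t =>
      right
      rw [List.Chain', List.isChain_cons_cons] at hch
      obtain ⟨hfb, hch⟩ := hch
      have hb : b = true := hfb.resolve_left (by simp)
      subst hb
      have ht : t ≠ [] := by
        intro h; subst h; simp at hlen
      have hlast : t.getLast ht = true := by
        have h0 := hcyc (by simp)
        have hg : (false :: true :: t).getLast (by simp) = t.getLast ht := by
          rw [List.getLast_eq_iff_getLast?_eq_some, ← List.getLast?_eq_getLast (l := t) ht]
          cases t with
          | nil => exact absurd rfl ht
          | cons c u => simp
        rw [hg] at h0
        exact h0.resolve_right (by simp)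
      have hdecomp : t.dropLast ++ [true] = t := by
        conv_rhs => rw [← List.dropLast_concat_getLast ht]
        rw [hlast]
      refine ⟨t.dropLast, (mem_G _ _).mpr ⟨?_, ?_⟩, by rw [hdecomp]⟩
      · have := congrArg List.length hdecomp
        simp only [List.length_append, List.length_singleton] at this
        simp only [List.length_cons] at hlen
        omega
      · have hcht : t.Chain' R := hch.tail
        rw [← hdecomp, List.Chain', List.isChain_append] at hcht
        exact hcht.1

lemma card_T (k : ℕ) : (T k).card = lucas (k + 3) := by
  have hdisj : Disjoint ((G (k+2)).image (true :: ·))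
      ((G k).image (fun t => false :: true :: (t ++ [true]))) := by
    rw [Finset.disjoint_left]
    intro a ha hb
    simp only [Finset.mem_image] at ha hb
    obtain ⟨t, -, rfl⟩ := ha
    obtain ⟨s, -, h⟩ := hb
    simp at h
  rw [T, Finset.card_union_of_disjoint hdisj,
    Finset.card_image_of_injective _ (fun a b h => by simpa using h),
    Finset.card_image_of_injective _ (fun a b h => by simpa using h),
    card_G, card_G, show lucas (k + 3) = lucas ((k+2)+1) from rfl, lucas_eq (k+2)]

lemma cyc_list_card (k : ℕ) :
    Nat.card {l : List Bool // l.length = k + 3 ∧ CyGood l} = lucas (k + 3) := by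
  have e : {l : List Bool // l.length = k + 3 ∧ CyGood l} ≃ {l // l ∈ T k} :=
    Equiv.subtypeEquivRight (fun l => (mem_T k l).symm)
  rw [Nat.card_congr e, Nat.card_eq_fintype_card, Fintype.card_coe, card_T]

end CircAux

namespace CircAux

lemma R_iff (a b : Bool) : R a b ↔ ¬ (a = false ∧ b = false) := by
  cases a <;> cases b <;> simp [R]

lemma get_idx_congr {α : Type*} (l : List α) {i j : ℕ} (h : i = j) (hi : i < l.length) :
    l.get ⟨i, hi⟩ = l.get ⟨j, h ▸ hi⟩ := by subst h; rfl

lemma cyc_fun_card (m : ℕ) (hm : 2 ≤ m) :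
    Nat.card {w : ZMod m → Bool // ∀ i : ZMod m, R (w i) (w (i + 1))} = lucas m := by
  rcases Nat.lt_or_ge m 3 with h3 | h3
  · -- m = 2
    have hm2 : m = 2 := by omega
    subst hm2
    rw [Nat.card_eq_fintype_card]
    decide
  · obtain ⟨k, rfl⟩ : ∃ k, m = k + 3 := ⟨m - 3, by omega⟩
    haveI : NeZero (k + 3) := ⟨by omega⟩
    haveI : Fact (1 < k + 3) := ⟨by omega⟩
    rw [← cyc_list_card k]
    apply Nat.card_congr
    refine
      { toFun := fun w => ⟨List.ofFn (fun i : Fin (k+3) => w.1 ((i : ℕ) : ZMod (k+3))), ?_, ?_, ?_⟩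
        invFun := fun l => ⟨fun z => l.1.get ⟨z.val, by rw [l.2.1]; exact z.val_lt⟩, ?_⟩
        left_inv := ?_
        right_inv := ?_ }
    · simp
    · -- Chain'
      obtain ⟨w, hw⟩ := w
      rw [List.Chain', List.isChain_iff_getElem]
      intro i hi
      simp only [List.getElem_ofFn]
      show R (w ((i : ℕ) : ZMod (k+3))) (w (((i + 1 : ℕ)) : ZMod (k+3)))
      rw [Nat.cast_add, Nat.cast_one]
      exact hw _
    · -- wrap
      obtain ⟨w, hw⟩ := w
      intro h
      rw [List.getLast_eq_getElem, List.head_eq_getElem_zero]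
      simp only [List.getElem_ofFn, List.length_ofFn]
      show R (w (((k + 3 - 1 : ℕ)) : ZMod (k+3))) (w ((0 : ℕ) : ZMod (k+3)))
      have h1 : (((k + 3 - 1 : ℕ)) : ZMod (k+3)) + 1 = ((0 : ℕ) : ZMod (k+3)) := by
        rw [show ((k + 3 - 1 : ℕ)) = k + 2 from rfl]
        have hself := ZMod.natCast_self (k+3)
        push_cast at hself ⊢
        linear_combination hself
      have := hw (((k + 3 - 1 : ℕ)) : ZMod (k+3))
      rw [h1] at this
      exact this
    · -- inverse condition
      obtain ⟨l, hlen, hch, hcyc⟩ := l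
      intro z
      have hzv : z.val < k + 3 := z.val_lt
      have hval1 : (1 : ZMod (k+3)).val = 1 := ZMod.val_one _
      have hadd : (z + 1).val = (z.val + 1) % (k + 3) := by
        rw [ZMod.val_add, hval1]
      have hzv' : (z + 1).val < k + 3 := (z + 1).val_lt
      show R (l.get ⟨z.val, by omega⟩) (l.get ⟨(z + 1).val, by omega⟩)
      rcases Nat.lt_or_ge (z.val + 1) (k + 3) with hlt | hge
      · have hv1 : (z + 1).val = z.val + 1 := by rw [hadd, Nat.mod_eq_of_lt hlt]
        have hc := List.isChain_iff_getElem.mp hch z.val (by rw [hlen]; omega)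
        rw [get_idx_congr l hv1]
        exact hc
      · have hz : z.val = k + 2 := by omega
        have hv0 : (z + 1).val = 0 := by rw [hadd, hz]; simp
        have hc := hcyc (by intro hnil; rw [hnil] at hlen; simp at hlen)
        rw [List.getLast_eq_getElem, List.head_eq_getElem_zero] at hc
        rw [get_idx_congr l hv0, get_idx_congr l (show z.val = l.length - 1 by omega)]
        simp only [List.get_eq_getElem]
        exact hc
    · -- left_inv
      intro w
      ext z
      simp only [List.get_ofFn]
      show w.1 ((z.val : ℕ) : ZMod (k+3)) = w.1 z
      exact congrArg w.1 (ZMod.natCast_rightInverse z)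
    · -- right_inv
      intro l
      apply Subtype.ext
      apply List.ext_get (by simp [l.2.1])
      intro i h1 h2
      simp only [List.get_ofFn]
      show l.1.get ⟨(((i : ℕ) : ZMod (k+3))).val, by rw [l.2.1]; exact ZMod.val_lt _⟩
          = l.1.get ⟨i, h2⟩
      have hval : (((i : ℕ) : ZMod (k+3))).val = i := by
        rw [ZMod.val_natCast]
        exact Nat.mod_eq_of_lt (by simp at h1; omega)
      rw [get_idx_congr l.1 hval]

end CircAux

section Main

open CircAux

theorem circular_words_avoiding_0u0 (p d : ℕ) (hd : 1 ≤ d) (hdp : d < p) :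
    Nat.card {w : ZMod p → Bool //
        ∀ i : ZMod p, ¬ (w i = false ∧ w (i + (d : ZMod p)) = false)}
      = lucas (p / Nat.gcd d p) ^ Nat.gcd d p := by
  set Δ := Nat.gcd d p with hΔ
  set m := p / Δ with hm
  have hp0 : 0 < p := by omega
  have hΔpos : 0 < Δ := Nat.gcd_pos_of_pos_left _ hd
  have hΔd : Δ ∣ d := Nat.gcd_dvd_left _ _
  have hΔp : Δ ∣ p := Nat.gcd_dvd_right _ _
  have hpm : Δ * m = p := Nat.mul_div_cancel' hΔp
  have hΔled : Δ ≤ d := Nat.le_of_dvd hd hΔd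
  have hm2 : 2 ≤ m := by
    rcases Nat.lt_or_ge m 2 with h | h
    · interval_cases m <;> omega
    · exact h
  haveI : NeZero p := ⟨by omega⟩
  haveI : NeZero Δ := ⟨by omega⟩
  haveI : NeZero m := ⟨by omega⟩
  haveI : Fact (1 < m) := ⟨by omega⟩
  -- the interleaving map
  set f : ZMod Δ × ZMod m → ZMod p :=
    fun x => (x.1.val : ZMod p) + (d : ZMod p) * (x.2.val : ZMod p) with hf
  have hpdm : p ∣ d * m := by
    obtain ⟨d', hd'⟩ := hΔd
    refine ⟨d', ?_⟩
    rw [hd', ← hpm]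
    ring
  have keyA : ∀ x y : ℕ, x ≡ y [MOD m] → (d : ZMod p) * (x : ZMod p) = d * y := by
    intro x y hxy
    have h1 : d * x ≡ d * y [MOD d * m] := hxy.mul_left' d
    have h2 : d * x ≡ d * y [MOD p] := h1.of_dvd hpdm
    have := (ZMod.natCast_eq_natCast_iff _ _ _).mpr h2
    push_cast at this
    exact this
  have f_shift : ∀ a b, f (a, b + 1) = f (a, b) + d := by
    intro a b
    have hval : (b + 1).val ≡ b.val + 1 [MOD m] := by
      rw [ZMod.val_add, ZMod.val_one]
      exact Nat.mod_modEq _ _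
    have := keyA _ _ hval
    simp only [hf]
    rw [this]
    push_cast
    ring
  have f_inj : Function.Injective f := by
    rintro ⟨a, b⟩ ⟨a', b'⟩ hab
    simp only [hf] at hab
    have hcast : ((a.val + d * b.val : ℕ) : ZMod p) = ((a'.val + d * b'.val : ℕ) : ZMod p) := by
      push_cast
      exact hab
    have hmod : a.val + d * b.val ≡ a'.val + d * b'.val [MOD p] :=
      (ZMod.natCast_eq_natCast_iff _ _ _).mp hcast
    -- reduce mod Δ
    have hmodΔ : a.val + d * b.val ≡ a'.val + d * b'.val [MOD Δ] := hmod.of_dvd hΔp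
    have hdb : ∀ c : ℕ, d * c ≡ 0 [MOD Δ] :=
      fun c => Nat.modEq_zero_iff_dvd.mpr (hΔd.mul_right c)
    have ha : a.val ≡ a'.val [MOD Δ] := by
      have e1 : a.val + 0 ≡ a.val + d * b.val [MOD Δ] := Nat.ModEq.add_left _ (hdb b.val).symm
      have e2 : a'.val + d * b'.val ≡ a'.val + 0 [MOD Δ] := Nat.ModEq.add_left _ (hdb b'.val)
      simpa using e1.trans (hmodΔ.trans e2)
    have haa : a = a' :=
      ZMod.val_injective Δ (ha.eq_of_lt_of_lt a.val_lt a'.val_lt)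
    subst haa
    have hb : d * b.val ≡ d * b'.val [MOD p] := hmod.add_left_cancel' _
    obtain ⟨d', hd'⟩ := hΔd
    have hb2 : Δ * (d' * b.val) ≡ Δ * (d' * b'.val) [MOD Δ * m] := by
      simp only [← mul_assoc, ← hd', hpm]
      exact hb
    have hb3 : d' * b.val ≡ d' * b'.val [MOD m] :=
      Nat.ModEq.mul_left_cancel' (by omega) hb2
    have hcop : Nat.Coprime m d' := by
      have := Nat.coprime_div_gcd_div_gcd (m := d) (n := p) hΔpos
      have hd'' : d' = d / Δ := by rw [hd']; rw [Nat.mul_div_cancel_left _ hΔpos]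
      rw [hd'']
      exact (Nat.Coprime.symm this)
    have hb4 : b.val ≡ b'.val [MOD m] := Nat.ModEq.cancel_left_of_coprime hcop hb3
    have : b = b' := ZMod.val_injective m (hb4.eq_of_lt_of_lt b.val_lt b'.val_lt)
    rw [this]
  have f_bij : Function.Bijective f := by
    rw [Fintype.bijective_iff_injective_and_card]
    refine ⟨f_inj, ?_⟩
    rw [Fintype.card_prod, ZMod.card, ZMod.card, ZMod.card, hpm]
  set E : ZMod Δ × ZMod m ≃ ZMod p := Equiv.ofBijective f f_bij with hE
  have hEapp : ∀ x, E x = f x := fun _ => rfl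
  -- main equivalence
  have main :
      {w : ZMod p → Bool // ∀ i : ZMod p, R (w i) (w (i + d))} ≃
        (ZMod Δ → {v : ZMod m → Bool // ∀ j : ZMod m, R (v j) (v (j + 1))}) :=
    { toFun := fun w a =>
        ⟨fun b => w.1 (f (a, b)), by
          intro b
          have h := w.2 (f (a, b))
          rw [← f_shift a b] at h
          exact h⟩
      invFun := fun F =>
        ⟨fun i => (F (E.symm i).1).1 (E.symm i).2, by
          intro i
          have h1 : E ((E.symm i).1, (E.symm i).2) = i := by
            rw [Prod.mk.eta]; exact E.apply_symm_apply i
          have h2 : i + d = f ((E.symm i).1, (E.symm i).2 + 1) := by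
            rw [f_shift, ← hEapp, h1]
          have h3 : E.symm (i + d) = ((E.symm i).1, (E.symm i).2 + 1) := by
            rw [h2, ← hEapp, E.symm_apply_apply]
          show R ((F (E.symm i).1).1 (E.symm i).2)
            ((F (E.symm (i + (d : ZMod p))).1).1 (E.symm (i + (d : ZMod p))).2)
          rw [h3]
          exact (F (E.symm i).1).2 (E.symm i).2⟩
      left_inv := by
        intro w
        apply Subtype.ext
        funext i
        show w.1 (f ((E.symm i).1, (E.symm i).2)) = w.1 i
        rw [Prod.mk.eta, ← hEapp, E.apply_symm_apply]
      right_inv := by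
        intro F
        funext a
        apply Subtype.ext
        funext b
        show (F (E.symm (f (a, b))).1).1 (E.symm (f (a, b))).2 = (F a).1 b
        rw [show E.symm (f (a, b)) = (a, b) from by rw [← hEapp, E.symm_apply_apply]] }
  have conv1 :
      Nat.card {w : ZMod p → Bool //
          ∀ i : ZMod p, ¬ (w i = false ∧ w (i + (d : ZMod p)) = false)}
        = Nat.card {w : ZMod p → Bool // ∀ i : ZMod p, R (w i) (w (i + d))} :=
    Nat.card_congr (Equiv.subtypeEquivRight (fun w => by
      constructor
      · intro h i; exact (R_iff _ _).mpr (h i)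
      · intro h i; exact (R_iff _ _).mp (h i)))
  rw [conv1, Nat.card_congr main, Nat.card_fun, cyc_fun_card m hm2, Nat.card_zmod]

end Main
end

section
/- Let p ≥ 1 and d with 1 ≤ d < p, Δ = gcd(d,p). The set of circular binary words w : ZMod p → {0,1} such that (i) there is no i with w(i)=0 and w(i+d)=0, and (ii) there is no i with w(i)=w(i+d)=w(i+2d)=1, has cardinality P(p/Δ)^Δ, where P is the Perrin sequence (P(0)=3, P(1)=0, P(2)=2, P(n)=P(n-2)+P(n-3)). -/
/-- states: 0 ↦ (ff,tt), 1 ↦ (tt,ff), 2 ↦ (tt,tt) -/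
def st : Fin 3 → Bool × Bool
  | 0 => (false, true)
  | 1 => (true, false)
  | 2 => (true, true)

def stInv : Bool × Bool → Fin 3
  | (false, _) => 0
  | (true, false) => 1
  | (true, true) => 2

def adj (i j : Fin 3) : Bool :=
  ((st i).2 == (st j).1) && !((st i).1 && (st j).1 && (st j).2)

def M : Matrix (Fin 3) (Fin 3) ℕ := fun i j => if adj i j then 1 else 0

lemma M_cube : M ^ 3 = M + 1 := by
  ext i j
  fin_cases i <;> fin_cases j <;>
    simp [pow_succ, Matrix.mul_apply, Fin.sum_univ_three, M, adj, st, Matrix.one_apply]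

lemma trace_rec (n : ℕ) :
    (M ^ (n + 3)).trace = (M ^ (n + 1)).trace + (M ^ n).trace := by
  have : M ^ (n + 3) = M ^ (n + 1) + M ^ n := by
    rw [show n + 3 = n + 3 from rfl, pow_add, M_cube, mul_add, mul_one, ← pow_succ]
  rw [this, Matrix.trace_add]

lemma trace_perrin (n : ℕ) : (M ^ n).trace = perrin n := by
  induction n using Nat.strong_induction_on with
  | _ n ih =>
    match n with
    | 0 => simp [Matrix.trace, Matrix.diag, Fin.sum_univ_three, perrin]
    | 1 =>
      show M 0 0 + M 1 1 + M 2 2 = perrin 1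
      decide
    | 2 =>
      rw [Matrix.trace, show (2:ℕ) = 1 + 1 from rfl, pow_add, pow_one]
      show (M*M) 0 0 + ((M*M) 1 1 + (M*M) 2 2) = perrin 2
      simp [Matrix.mul_apply, Fin.sum_univ_three]
      decide
    | (n + 3) =>
      rw [trace_rec, ih (n+1) (by omega), ih n (by omega)]
      rfl


def PathSp (n : ℕ) (i j : Fin 3) : Type :=
  {g : Fin (n + 1) → Fin 3 // g 0 = i ∧ g (Fin.last n) = j ∧
    ∀ k : Fin n, adj (g k.castSucc) (g k.succ) = true}

def pathEquiv (n : ℕ) (i j : Fin 3) :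
    PathSp (n + 1) i j ≃ Σ k : {k : Fin 3 // adj i k = true}, PathSp n k j where
  toFun g := ⟨⟨g.1 1, by
      simpa [Fin.succ_zero_eq_one, g.2.1] using g.2.2.2 0⟩,
    ⟨fun m => g.1 m.succ, rfl, by
      simpa [Fin.succ_last] using g.2.2.1, fun k => by
      simpa [← Fin.succ_castSucc] using g.2.2.2 k.succ⟩⟩
  invFun x := ⟨Fin.cons i x.2.1, ⟨Fin.cons_zero _ _, by
      rw [show Fin.last (n+1) = (Fin.last n).succ from rfl, Fin.cons_succ]
      exact x.2.2.2.1, by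
      intro k
      induction k using Fin.cases with
      | zero =>
        rw [Fin.castSucc_zero, Fin.cons_zero, Fin.cons_succ, x.2.2.1]
        exact x.1.2
      | succ k =>
        rw [← Fin.succ_castSucc, Fin.cons_succ, Fin.cons_succ]
        exact x.2.2.2.2 k⟩⟩
  left_inv g := by
    apply Subtype.ext
    funext m
    induction m using Fin.cases with
    | zero => simp [g.2.1]
    | succ m => simp
  right_inv x := by
    obtain ⟨⟨k, hk⟩, g, hg0, hgl, hadj⟩ := x
    have h1 : (Fin.cons i g : Fin (n+2) → Fin 3) 1 = k := by
      rw [← Fin.succ_zero_eq_one, Fin.cons_succ, hg0]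
    apply Sigma.ext
    · exact Subtype.ext h1
    · show HEq (⟨fun m => (Fin.cons i g : Fin (n+2) → Fin 3) m.succ, _⟩ :
        PathSp n _ j) (⟨g, hg0, hgl, hadj⟩ : PathSp n k j)
      rw [Subtype.heq_iff_coe_eq]
      · funext m
        show (Fin.cons i g : Fin (n+2) → Fin 3) m.succ = g m
        exact Fin.cons_succ _ _ _
      · intro x
        simp [h1]

lemma card_pathSp (n : ℕ) (i j : Fin 3) : Nat.card (PathSp n i j) = (M ^ n) i j := by
  induction n generalizing i j with
  | zero =>
    rw [pow_zero]
    rcases eq_or_ne i j with h | h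
    · subst h
      rw [Matrix.one_apply_eq]
      rw [Nat.card_eq_one_iff_unique]
      constructor
      · constructor
        rintro ⟨g, hg0, _, _⟩ ⟨g', hg'0, _, _⟩
        apply Subtype.ext
        funext m
        show g m = g' m
        rw [Fin.fin_one_eq_zero m, hg0, hg'0]
      · exact ⟨⟨fun _ => i, rfl, rfl, fun k => k.elim0⟩⟩
    · rw [Matrix.one_apply_ne h]
      have : IsEmpty (PathSp 0 i j) := by
        constructor
        rintro ⟨g, hg0, hgl, _⟩
        exact h (hg0 ▸ hgl ▸ rfl)
      exact Nat.card_of_isEmpty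
  | succ n ih =>
    rw [Nat.card_congr (pathEquiv n i j)]
    have : ∀ k : {k : Fin 3 // adj i k = true}, Fintype (PathSp n k j) := by
      intro k
      unfold PathSp
      infer_instance
    rw [Nat.card_eq_fintype_card, Fintype.card_sigma]
    have : ∀ k : {k : Fin 3 // adj i k = true},
        Fintype.card (PathSp n k.1 j) = (M ^ n) k.1 j := by
      intro k; rw [← Nat.card_eq_fintype_card, ih]
    simp_rw [this]
    rw [pow_succ', Matrix.mul_apply]
    rw [← Finset.sum_subtype (Finset.filter (fun k => adj i k = true) Finset.univ)
      (fun k => by simp) (fun k => (M ^ n) k j), Finset.sum_filter]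
    apply Finset.sum_congr rfl
    intro k _
    simp [M, ite_mul]

def CW (m : ℕ) : Type := {s : ZMod m → Fin 3 // ∀ x : ZMod m, adj (s x) (s (x + 1)) = true}

def GoodWord (m : ℕ) : Type := {f : ZMod m → Bool //
  (∀ i : ZMod m, ¬ (f i = false ∧ f (i + 1) = false)) ∧
  (∀ i : ZMod m, ¬ (f i = true ∧ f (i + 1) = true ∧ f (i + 1 + 1) = true))}

-- basic facts about st/adj
lemma st_stInv (a b : Bool) (h : ¬ (a = false ∧ b = false)) : st (stInv (a, b)) = (a, b) := by
  cases a <;> cases b <;> simp_all [st, stInv]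

lemma stInv_st : ∀ i : Fin 3, stInv (st i) = i := by decide

lemma st_ne_ff : ∀ i : Fin 3, ¬ ((st i).1 = false ∧ (st i).2 = false) := by decide

lemma adj_match' : ∀ i j : Fin 3, adj i j = true → (st i).2 = (st j).1 := by decide

lemma adj_no111' : ∀ i j : Fin 3, adj i j = true →
    ¬ ((st i).1 = true ∧ (st j).1 = true ∧ (st j).2 = true) := by decide

lemma adj_match {i j : Fin 3} (h : adj i j = true) : (st i).2 = (st j).1 := adj_match' i j h

lemma adj_no111 {i j : Fin 3} (h : adj i j = true) :
    ¬ ((st i).1 = true ∧ (st j).1 = true ∧ (st j).2 = true) := adj_no111' i j h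

lemma zmod_val_add_one {m : ℕ} (z : ZMod (m+1)) : (z + 1).val = (z.val + 1) % (m + 1) := by
  rw [ZMod.val_add, ZMod.val_one_eq_one_mod, Nat.add_mod_mod]

def wordEquivCW (m : ℕ) : GoodWord m ≃ CW m where
  toFun f := ⟨fun z => stInv (f.1 z, f.1 (z + 1)), by
    intro z
    have h1 : st (stInv (f.1 z, f.1 (z + 1))) = (f.1 z, f.1 (z + 1)) :=
      st_stInv _ _ (f.2.1 z)
    have h2 : st (stInv (f.1 (z+1), f.1 (z + 1 + 1))) = (f.1 (z+1), f.1 (z + 1 + 1)) :=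
      st_stInv _ _ (f.2.1 (z+1))
    have h3 := f.2.2 z
    rw [adj, Bool.and_eq_true, h1, h2]
    constructor
    · simp
    · simp only [Bool.not_eq_true']
      cases ha : f.1 z <;> cases hb : f.1 (z+1) <;> cases hc : f.1 (z+1+1) <;>
        simp_all⟩
  invFun s := ⟨fun z => (st (s.1 z)).1, by
    constructor
    · intro z
      show ¬ ((st (s.1 z)).1 = false ∧ (st (s.1 (z+1))).1 = false)
      have e1 := adj_match (s.2 z)
      rw [← e1]
      exact st_ne_ff _
    · intro z
      show ¬ ((st (s.1 z)).1 = true ∧ (st (s.1 (z+1))).1 = true ∧ (st (s.1 (z+1+1))).1 = true)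
      have e2 := adj_match (s.2 (z+1))
      have h := adj_no111 (s.2 z)
      rw [← e2]
      exact h⟩
  left_inv f := by
    apply Subtype.ext
    funext z
    show (st (stInv (f.1 z, f.1 (z + 1)))).1 = f.1 z
    rw [st_stInv _ _ (f.2.1 z)]
  right_inv s := by
    apply Subtype.ext
    funext z
    show stInv ((st (s.1 z)).1, (st (s.1 (z+1))).1) = s.1 z
    rw [← adj_match (s.2 z), Prod.mk.eta, stInv_st]

def cwEquivPaths (m : ℕ) : CW (m + 1) ≃ Σ i : Fin 3, PathSp (m + 1) i i where
  toFun s := ⟨s.1 0, fun k : Fin (m + 2) => s.1 ((k.val : ℕ) : ZMod (m+1)), by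
    refine ⟨by norm_num, ?_, ?_⟩
    · show s.1 (((m + 1 : ℕ) : ZMod (m+1))) = s.1 0
      rw [ZMod.natCast_self]
    · intro k
      have : (((k.val + 1 : ℕ)) : ZMod (m+1)) = ((k.val : ℕ) : ZMod (m+1)) + 1 := by push_cast; ring
      show adj (s.1 ((k.castSucc.val : ℕ) : ZMod (m+1))) (s.1 ((k.succ.val : ℕ) : ZMod (m+1))) = true
      rw [Fin.coe_castSucc, Fin.val_succ, this]
      exact s.2 _⟩
  invFun x := ⟨fun z => x.2.1 ⟨z.val, lt_trans z.val_lt (by omega)⟩, by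
    intro z
    obtain ⟨i, g, hg0, hgl, hadj⟩ := x
    show adj (g ⟨z.val, lt_trans z.val_lt (by omega)⟩) (g ⟨(z+1).val, lt_trans (z+1).val_lt (by omega)⟩) = true
    have hz := z.val_lt
    have hv : (z + 1).val = (z.val + 1) % (m + 1) := zmod_val_add_one z
    rcases Nat.lt_or_ge (z.val + 1) (m + 1) with h | h
    · have hv' : (z + 1).val = z.val + 1 := by rw [hv, Nat.mod_eq_of_lt h]
      have := hadj ⟨z.val, hz⟩
      rw [Fin.castSucc_mk, Fin.succ_mk] at this
      convert this using 3
      exact Fin.ext hv'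
    · have hzm : z.val + 1 = m + 1 := by omega
      have hv' : (z + 1).val = 0 := by rw [hv, hzm, Nat.mod_self]
      have h2 : g ⟨(z+1).val, by omega⟩ = g 0 := by
        congr 1
        apply Fin.ext
        simpa using hv'
      rw [h2, hg0, ← hgl]
      have := hadj ⟨z.val, hz⟩
      rw [Fin.castSucc_mk, Fin.succ_mk] at this
      have h3 : (⟨z.val + 1, by omega⟩ : Fin (m+2)) = Fin.last (m+1) := by
        apply Fin.ext
        simpa using hzm
      rwa [h3] at this⟩
  left_inv s := by
    apply Subtype.ext
    funext z
    show s.1 (((⟨z.val, _⟩ : Fin (m+2)).val : ℕ) : ZMod (m+1)) = s.1 z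
    exact congrArg s.1 (ZMod.natCast_rightInverse z)
  right_inv x := by
    obtain ⟨i, g, hg0, hgl, hadj⟩ := x
    have key : ∀ (k : Fin (m+2)) (hlt : (((k.val : ℕ) : ZMod (m+1))).val < m + 2),
        g ⟨(((k.val : ℕ) : ZMod (m+1))).val, hlt⟩ = g k := by
      intro k hlt
      have hval : (((k.val : ℕ) : ZMod (m+1))).val = k.val % (m + 1) := ZMod.val_natCast _ _
      rcases Nat.lt_or_ge k.val (m+1) with h | h
      · have : (((k.val : ℕ) : ZMod (m+1))).val = k.val := by rw [hval, Nat.mod_eq_of_lt h]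
        congr 1
        exact Fin.ext this
      · have hk : k.val = m + 1 := by have := k.isLt; omega
        have h0 : (((k.val : ℕ) : ZMod (m+1))).val = 0 := by rw [hval, hk, Nat.mod_self]
        have e1 : (⟨(((k.val : ℕ) : ZMod (m+1))).val, hlt⟩ : Fin (m+2)) = 0 := by
          apply Fin.ext; simpa using h0
        have e2 : k = Fin.last (m+1) := Fin.ext (by simpa using hk)
        rw [e1, e2, hg0, hgl]
    have hfst : g ⟨(((0 : ZMod (m+1)).val : ℕ)), by simp [ZMod.val_zero]⟩ = i := by
      have : (⟨(((0 : ZMod (m+1)).val : ℕ)), by simp [ZMod.val_zero]⟩ : Fin (m+2)) = 0 := by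
        apply Fin.ext; simp [ZMod.val_zero]
      rw [this, hg0]
    apply Sigma.ext
    · exact hfst
    · refine (Subtype.heq_iff_coe_eq ?_).mpr ?_
      · intro y
        simp [hg0, hfst]
      · funext k
        exact key k _


lemma card_goodWord (m : ℕ) : Nat.card (GoodWord (m+1)) = perrin (m+1) := by
  rw [Nat.card_congr ((wordEquivCW (m+1)).trans (cwEquivPaths m))]
  haveI inst : ∀ i : Fin 3, Fintype (PathSp (m+1) i i) := fun i => by
    unfold PathSp; infer_instance
  rw [Nat.card_eq_fintype_card, Fintype.card_sigma]
  have hcard : ∀ i : Fin 3, Fintype.card (PathSp (m+1) i i) = (M ^ (m+1)) i i := fun i => by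
    rw [← Nat.card_eq_fintype_card, card_pathSp]
  simp_rw [hcard]
  rw [← trace_perrin (m+1)]
  simp [Matrix.trace, Matrix.diag]

theorem circular_words_avoiding_0u0_1u1u1 (p d : ℕ) (hd : 1 ≤ d) (hdp : d < p) :
    Nat.card {w : ZMod p → Bool //
        (∀ i : ZMod p, ¬ (w i = false ∧ w (i + (d : ZMod p)) = false)) ∧
        (∀ i : ZMod p, ¬ (w i = true ∧ w (i + (d : ZMod p)) = true ∧
            w (i + (2 * d : ℕ)) = true))}
      = perrin (p / Nat.gcd d p) ^ Nat.gcd d p := by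
  set Δ := Nat.gcd d p with hΔdef
  set n := p / Δ with hndef
  haveI : NeZero p := ⟨by omega⟩
  have hΔpos : 0 < Δ := Nat.gcd_pos_of_pos_left p (by omega)
  have hΔp : Δ ∣ p := Nat.gcd_dvd_right d p
  have hΔd : Δ ∣ d := Nat.gcd_dvd_left d p
  have hnpos : 0 < n := Nat.div_pos (Nat.le_of_dvd (by omega) hΔp) hΔpos
  haveI : NeZero n := ⟨by omega⟩
  have hnΔ : n * Δ = p := Nat.div_mul_cancel hΔp
  have hpnd : p ∣ n * d := by
    obtain ⟨e, he⟩ := hΔd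
    exact ⟨e, by rw [he, ← mul_assoc, hnΔ]⟩
  -- the interlocking map
  set E : Fin Δ × ZMod n → ZMod p :=
    fun x => ((x.1 : ℕ) : ZMod p) + ((x.2.val * d : ℕ) : ZMod p) with hEdef
  have shift : ∀ (r : Fin Δ) (k : ZMod n) (c : ℕ),
      E (r, k + (c : ZMod n)) = E (r, k) + ((c * d : ℕ) : ZMod p) := by
    intro r k c
    have hmod : (k + (c : ZMod n)).val ≡ k.val + c [MOD n] := by
      rw [ZMod.val_add, ZMod.val_natCast]
      exact (Nat.mod_modEq _ n).trans (Nat.ModEq.add_left k.val (Nat.mod_modEq c n))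
    have h1 : (((k + (c : ZMod n)).val * d : ℕ) : ZMod p) = (((k.val + c) * d : ℕ) : ZMod p) := by
      rw [ZMod.natCast_eq_natCast_iff]
      exact (hmod.mul_right' d).of_dvd hpnd
    show _ + _ = _
    rw [h1, add_assoc]
    congr 1
    push_cast
    ring
  have hEinj : Function.Injective E := by
    rintro ⟨r, k⟩ ⟨r', k'⟩ h
    simp only [hEdef] at h
    have h1 : r = r' := by
      have hc := congrArg (ZMod.castHom hΔp (ZMod Δ)) h
      simp only [map_add, map_mul, map_natCast, Nat.cast_mul] at hc
      rw [show ((d : ℕ) : ZMod Δ) = 0 from (ZMod.natCast_eq_zero_iff d Δ).mpr hΔd] at hc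
      simp only [mul_zero, add_zero] at hc
      have := congrArg ZMod.val hc
      rw [ZMod.val_cast_of_lt r.isLt, ZMod.val_cast_of_lt r'.isLt] at this
      exact Fin.ext this
    subst h1
    have h2 : ((k.val * d : ℕ) : ZMod p) = ((k'.val * d : ℕ) : ZMod p) := by
      exact add_left_cancel h
    rw [ZMod.natCast_eq_natCast_iff] at h2
    have h3 : k.val ≡ k'.val [MOD p / Nat.gcd p d] :=
      Nat.ModEq.cancel_right_div_gcd (by omega) h2
    rw [Nat.gcd_comm p d, ← hΔdef, ← hndef] at h3
    have := h3.eq_of_lt_of_lt k.val_lt k'.val_lt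
    exact Prod.ext rfl (ZMod.val_injective n this)
  have hEbij : Function.Bijective E := by
    rw [Fintype.bijective_iff_injective_and_card]
    refine ⟨hEinj, ?_⟩
    rw [Fintype.card_prod, Fintype.card_fin, ZMod.card, ZMod.card]
    rw [mul_comm]
    exact hnΔ
  set eE := Equiv.ofBijective E hEbij with heE
  have heEapp : ∀ x, eE x = E x := fun x => rfl
  -- key shift equalities
  have shift1 : ∀ (r : Fin Δ) (k : ZMod n), E (r, k + 1) = E (r, k) + (d : ZMod p) := by
    intro r k
    have := shift r k 1
    rwa [Nat.cast_one, one_mul] at this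
  have shift2 : ∀ (r : Fin Δ) (k : ZMod n), E (r, k + 1 + 1) = E (r, k) + ((2 * d : ℕ) : ZMod p) := by
    intro r k
    have := shift r k 2
    rw [show ((2 : ℕ) : ZMod n) = 1 + 1 by push_cast; ring] at this
    rwa [← add_assoc] at this
  -- the main equivalence
  have mainEquiv : {w : ZMod p → Bool //
        (∀ i : ZMod p, ¬ (w i = false ∧ w (i + (d : ZMod p)) = false)) ∧
        (∀ i : ZMod p, ¬ (w i = true ∧ w (i + (d : ZMod p)) = true ∧
            w (i + (2 * d : ℕ)) = true))} ≃ (Fin Δ → GoodWord n) := by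
    refine
      { toFun := fun w r => ⟨fun k => w.1 (E (r, k)), ?_, ?_⟩
        invFun := fun F => ⟨fun i => (F (eE.symm i).1).1 (eE.symm i).2, ?_, ?_⟩
        left_inv := ?_
        right_inv := ?_ }
    · intro k hk
      exact w.2.1 (E (r, k)) ⟨hk.1, by rw [← shift1 r k]; exact hk.2⟩
    · intro k hk
      exact w.2.2 (E (r, k)) ⟨hk.1, by rw [← shift1 r k]; exact hk.2.1,
        by rw [← shift2 r k]; exact hk.2.2⟩
    · intro i
      set q := eE.symm i with hq
      have hi : E (q.1, q.2) = i := by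
        rw [show (q.1, q.2) = q from rfl, hq]
        exact eE.apply_symm_apply i
      have hnext : eE.symm (i + (d : ZMod p)) = (q.1, q.2 + 1) := by
        rw [Equiv.symm_apply_eq, heEapp, shift1, hi]
      intro hk
      have h2 : (F (eE.symm (i + (d : ZMod p))).1).1 (eE.symm (i + (d : ZMod p))).2 = false := hk.2
      rw [hnext] at h2
      exact (F q.1).2.1 q.2 ⟨hk.1, h2⟩
    · intro i
      set q := eE.symm i with hq
      have hi : E (q.1, q.2) = i := by
        rw [show (q.1, q.2) = q from rfl, hq]
        exact eE.apply_symm_apply i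
      have hnext : eE.symm (i + (d : ZMod p)) = (q.1, q.2 + 1) := by
        rw [Equiv.symm_apply_eq, heEapp, shift1, hi]
      have hnext2 : eE.symm (i + ((2 * d : ℕ) : ZMod p)) = (q.1, q.2 + 1 + 1) := by
        rw [Equiv.symm_apply_eq, heEapp, shift2, hi]
      intro hk
      have h2 : (F (eE.symm (i + (d : ZMod p))).1).1 (eE.symm (i + (d : ZMod p))).2 = true := hk.2.1
      rw [hnext] at h2
      have h3 : (F (eE.symm (i + ((2 * d : ℕ) : ZMod p))).1).1
          (eE.symm (i + ((2 * d : ℕ) : ZMod p))).2 = true := hk.2.2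
      rw [hnext2] at h3
      exact (F q.1).2.2 q.2 ⟨hk.1, h2, h3⟩
    · intro w
      apply Subtype.ext
      funext i
      show w.1 (E ((eE.symm i).1, (eE.symm i).2)) = w.1 i
      rw [show ((eE.symm i).1, (eE.symm i).2) = eE.symm i from rfl]
      exact congrArg w.1 (eE.apply_symm_apply i)
    · intro F
      funext r
      apply Subtype.ext
      funext k
      show (F (eE.symm (E (r, k))).1).1 (eE.symm (E (r, k))).2 = (F r).1 k
      rw [show E (r, k) = eE (r, k) from rfl, eE.symm_apply_apply]
  rw [Nat.card_congr mainEquiv, Nat.card_fun, Nat.card_eq_fintype_card (α := Fin Δ),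
    Fintype.card_fin]
  congr 1
  obtain ⟨m, hm⟩ : ∃ m, n = m + 1 := ⟨n - 1, by omega⟩
  rw [hm, card_goodWord]
end

section
/- Let p ≥ 2 be even, φ = (1+√5)/2, L the Lucas sequence with L(1)=1, L(2)=3, L(n)=L(n-1)+L(n-2). Then for every divisor Δ of p, L(p/Δ)^Δ ≤ 3^{p/2}, with equality when Δ = p/2. -/
lemma lucas_sq_le (n : ℕ) (hn : 1 ≤ n) : lucas n ^ 2 ≤ 3 ^ n := by
  induction n using Nat.strong_induction_on with
  | _ n ih =>
    match n, hn with
    | 1, _ => simp [lucas]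
    | 2, _ => simp [lucas]
    | (m + 3), _ =>
      have h1 := ih (m + 2) (by omega) (by omega)
      have h2 := ih (m + 1) (by omega) (by omega)
      have : lucas (m + 3) = lucas (m + 2) + lucas (m + 1) := rfl
      rw [this]
      have h3 : (3:ℕ) ^ (m + 3) = 3 * 3 ^ (m + 2) := by ring
      have h4 : (3:ℕ) ^ (m + 2) = 3 * 3 ^ (m + 1) := by ring
      nlinarith [sq_nonneg (lucas (m+2) - lucas (m+1) : ℤ)]

theorem lucas_power_upper_bound (p : ℕ) (hp : 2 ≤ p) (hpe : Even p) :
    (∀ Δ : ℕ, Δ ∣ p → ((lucas (p / Δ) : ℝ)) ^ Δ ≤ 3 ^ (p / 2)) ∧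
    ((lucas (p / (p / 2)) : ℝ)) ^ (p / 2) = 3 ^ (p / 2) := by
  obtain ⟨k, hk⟩ := hpe
  have hk2 : p = 2 * k := by omega
  have hk1 : 1 ≤ k := by omega
  have hpk : p / 2 = k := by omega
  have hkey : p / (p / 2) = 2 := by
    rw [hpk, hk2, Nat.mul_div_cancel _ hk1]
  constructor
  · intro Δ hΔ
    have hΔ0 : Δ ≠ 0 := by rintro rfl; simp at hΔ; omega
    set n := p / Δ with hn
    have hnΔ : n * Δ = p := Nat.div_mul_cancel hΔ
    have hn1 : 1 ≤ n := by
      rcases Nat.eq_zero_or_pos n with h | h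
      · rw [h, zero_mul] at hnΔ; omega
      · exact h
    have hsq : (lucas n ^ Δ) ^ 2 ≤ (3 ^ k) ^ 2 := by
      calc (lucas n ^ Δ) ^ 2 = (lucas n ^ 2) ^ Δ := by ring
        _ ≤ (3 ^ n) ^ Δ := Nat.pow_le_pow_left (lucas_sq_le n hn1) Δ
        _ = 3 ^ (n * Δ) := by rw [← pow_mul]
        _ = (3 ^ k) ^ 2 := by rw [hnΔ, ← pow_mul, hk2]; ring_nf
    have hle : lucas n ^ Δ ≤ 3 ^ k :=
      (Nat.pow_le_pow_iff_left (by norm_num)).mp hsq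
    rw [hpk]
    calc ((lucas n : ℝ)) ^ Δ = ((lucas n ^ Δ : ℕ) : ℝ) := by push_cast; ring
      _ ≤ ((3 ^ k : ℕ) : ℝ) := by exact_mod_cast hle
      _ = 3 ^ k := by push_cast; ring
  · rw [hkey]
    norm_num [lucas]
end

section
/- Let p ≥ 3 with p ≠ 2. Then (1/p)·∑_{d|p} μ(p/d)·(√3)^d < 2·(√3/2)^p · (1/p)·∑_{d|p} μ(p/d)·2^d. -/
open ArithmeticFunction ArithmeticFunction.Moebius Finset

private lemma sqrt3_sq : Real.sqrt 3 ^ 2 = 3 := Real.sq_sqrt (by norm_num)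

private lemma sqrt3_pos : 0 < Real.sqrt 3 := Real.sqrt_pos.mpr (by norm_num)

private lemma sqrt3_le_two : Real.sqrt 3 ≤ 2 := by
  nlinarith [sqrt3_sq, sqrt3_pos]

private def Qprop (p : ℕ) : Prop :=
  (∑ d ∈ Finset.Icc 1 (p / 2), Real.sqrt 3 ^ d)
    + Real.sqrt 3 ^ p * (2 ^ (p / 2 + 2) - 4) / 2 ^ p < Real.sqrt 3 ^ p

private lemma Q3 : Qprop 3 := by
  unfold Qprop
  norm_num
  have h3 : Real.sqrt 3 ^ 3 = 3 * Real.sqrt 3 := by rw [pow_succ, sqrt3_sq]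
  nlinarith [sqrt3_pos]

private lemma Q6 : Qprop 6 := by
  unfold Qprop
  have h1 : Finset.Icc (1:ℕ) 3 = {1, 2, 3} := rfl
  norm_num [h1, Finset.sum_insert]
  have h3 : Real.sqrt 3 ^ 3 = 3 * Real.sqrt 3 := by rw [pow_succ, sqrt3_sq]
  have h6 : Real.sqrt 3 ^ 6 = 27 := by
    have h : Real.sqrt 3 ^ 6 = (Real.sqrt 3 ^ 2) ^ 3 := by ring
    rw [h, sqrt3_sq]; norm_num
  nlinarith [sqrt3_pos, sqrt3_le_two, sqrt3_sq]

private lemma Q_step (p : ℕ) (hp : 3 ≤ p) (h : Qprop p) : Qprop (p + 2) := by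
  unfold Qprop at h ⊢
  have hm : (p + 2) / 2 = p / 2 + 1 := Nat.add_div_right p (by norm_num)
  rw [hm]
  set m := p / 2 with hmdef
  have hm1 : 1 ≤ m := by omega
  set a := Real.sqrt 3 with ha
  -- sum split
  have hsum : (∑ d ∈ Finset.Icc 1 (m + 1), a ^ d)
      = (∑ d ∈ Finset.Icc 1 m, a ^ d) + a ^ (m + 1) := by
    rw [Finset.sum_Icc_succ_top (by omega)]
  -- a^(m+1) ≤ 2 * sum
  have hterm : a ^ m ≤ ∑ d ∈ Finset.Icc 1 m, a ^ d := by
    apply Finset.single_le_sum (f := fun d => a ^ d)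
    · intro i _; positivity
    · simp [Finset.mem_Icc]; omega
  have hapow : a ^ (m + 1) ≤ 2 * ∑ d ∈ Finset.Icc 1 m, a ^ d := by
    have : a ^ (m + 1) = a * a ^ m := by ring
    nlinarith [sqrt3_le_two, pow_nonneg sqrt3_pos.le m]
  -- second term
  have h2p : (0:ℝ) < 2 ^ p := by positivity
  have hx : (2:ℝ) ≤ 2 ^ m := by
    calc (2:ℝ) = 2 ^ 1 := by norm_num
    _ ≤ 2 ^ m := by apply pow_le_pow_right₀ (by norm_num) hm1
  have hap : (0:ℝ) ≤ a ^ p := by positivity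
  have hsecond : a ^ (p + 2) * (2 ^ (m + 1 + 2) - 4) / 2 ^ (p + 2)
      ≤ 3 * (a ^ p * (2 ^ (m + 2) - 4) / 2 ^ p) := by
    have e1 : a ^ (p + 2) = 3 * a ^ p := by
      rw [pow_add, sqrt3_sq]; ring
    have e2 : (2:ℝ) ^ (p + 2) = 4 * 2 ^ p := by rw [pow_add]; ring
    have e3 : (2:ℝ) ^ (m + 1 + 2) = 8 * 2 ^ m := by rw [pow_add]; norm_num [pow_succ]; ring
    have e4 : (2:ℝ) ^ (m + 2) = 4 * 2 ^ m := by rw [pow_add]; ring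
    rw [e1, e2, e3, e4]
    rw [div_le_iff₀ (by positivity : (0:ℝ) < 4 * 2 ^ p)]
    have e5 : 3 * (a ^ p * (4 * 2 ^ m - 4) / 2 ^ p) * (4 * 2 ^ p)
        = 12 * (a ^ p * (4 * 2 ^ m - 4)) := by
      field_simp
      ring
    rw [e5]
    nlinarith [hx, hap]
  have ha2 : a ^ (p + 2) = 3 * a ^ p := by rw [pow_add, sqrt3_sq]; ring
  rw [hsum, ha2]
  rw [ha2] at hsecond
  linarith [hsecond, hapow, h]

private lemma Q_add (b k : ℕ) (hb : 3 ≤ b) (h : Qprop b) : Qprop (b + 2 * k) := by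
  induction k with
  | zero => simpa using h
  | succ n ih =>
    have : b + 2 * (n + 1) = (b + 2 * n) + 2 := by ring
    rw [this]
    exact Q_step _ (by omega) ih

private lemma Q_of (p : ℕ) (hp : 3 ≤ p) (hp4 : p ≠ 4) : Qprop p := by
  rcases Nat.even_or_odd p with ⟨k, hk⟩ | ⟨k, hk⟩
  · have h6 : p = 6 + 2 * (k - 3) := by omega
    rw [h6]; exact Q_add 6 _ (by norm_num) Q6
  · have h3 : p = 3 + 2 * (k - 1) := by omega
    rw [h3]; exact Q_add 3 _ (by norm_num) Q3

private lemma erase_subset_Icc (p : ℕ) (hp : 1 ≤ p) :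
    p.divisors.erase p ⊆ Finset.Icc 1 (p / 2) := by
  intro d hd
  rw [Finset.mem_erase, Nat.mem_divisors] at hd
  obtain ⟨hne, hdvd, hp0⟩ := hd
  have hd1 : 1 ≤ d := Nat.pos_of_dvd_of_pos hdvd (by omega)
  obtain ⟨c, hc⟩ := hdvd
  have hc2 : 2 ≤ c := by
    rcases Nat.lt_or_ge c 2 with h | h
    · interval_cases c <;> omega
    · exact h
  rw [Finset.mem_Icc]
  constructor
  · exact hd1
  · rw [Nat.le_div_iff_mul_le (by norm_num)]
    calc d * 2 ≤ d * c := Nat.mul_le_mul_left d hc2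
    _ = p := hc.symm

private lemma tail_bound (p : ℕ) (hp : 1 ≤ p) (x : ℝ) (hx : 0 ≤ x) :
    |∑ d ∈ p.divisors.erase p, (μ (p / d) : ℝ) * x ^ d|
      ≤ ∑ d ∈ Finset.Icc 1 (p / 2), x ^ d := by
  calc |∑ d ∈ p.divisors.erase p, (μ (p / d) : ℝ) * x ^ d|
      ≤ ∑ d ∈ p.divisors.erase p, |(μ (p / d) : ℝ) * x ^ d| :=
        Finset.abs_sum_le_sum_abs _ _
    _ ≤ ∑ d ∈ p.divisors.erase p, x ^ d := by
        apply Finset.sum_le_sum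
        intro i _
        rw [abs_mul]
        have h1 : |((μ (p / i) : ℤ) : ℝ)| ≤ 1 := by
          rw [← Int.cast_abs]
          exact_mod_cast ArithmeticFunction.abs_moebius_le_one
        have h2 : |x ^ i| = x ^ i := abs_of_nonneg (by positivity)
        nlinarith [abs_nonneg (((μ (p / i) : ℤ) : ℝ)), pow_nonneg hx i, abs_nonneg (x ^ i)]
    _ ≤ ∑ d ∈ Finset.Icc 1 (p / 2), x ^ d := by
        apply Finset.sum_le_sum_of_subset_of_nonneg (erase_subset_Icc p hp)
        intro i _ _
        positivity

private lemma sum_split (p : ℕ) (hp : 1 ≤ p) (x : ℝ) :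
    ∑ d ∈ p.divisors, (μ (p / d) : ℝ) * x ^ d
      = x ^ p + ∑ d ∈ p.divisors.erase p, (μ (p / d) : ℝ) * x ^ d := by
  have hmem : p ∈ p.divisors := Nat.mem_divisors_self p (by omega)
  rw [← Finset.add_sum_erase _ _ hmem]
  congr 1
  rw [Nat.div_self (by omega), ArithmeticFunction.moebius_apply_one]
  norm_num

private lemma two_geom (m : ℕ) :
    ∑ d ∈ Finset.Icc 1 m, (2:ℝ) ^ d = 2 ^ (m + 1) - 2 := by
  induction m with
  | zero => simp
  | succ n ih =>
    rw [Finset.sum_Icc_succ_top (by omega), ih]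
    rw [pow_succ, pow_succ]
    ring

open ArithmeticFunction ArithmeticFunction.Moebius in
theorem attractor_count_comparison (p : ℕ) (hp : 3 ≤ p) (hp2 : p ≠ 2) :
    (1 / (p : ℝ)) * ∑ d ∈ p.divisors, (μ (p / d) : ℝ) * (Real.sqrt 3) ^ d
      < 2 * (Real.sqrt 3 / 2) ^ p *
        ((1 / (p : ℝ)) * ∑ d ∈ p.divisors, (μ (p / d) : ℝ) * 2 ^ d) := by
  have hp0 : (0:ℝ) < 1 / p := by
    have : (0:ℝ) < p := by exact_mod_cast Nat.lt_of_lt_of_le (by norm_num) hp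
    positivity
  by_cases hp4 : p = 4
  · subst hp4
    have hdiv : (4:ℕ).divisors = {1, 2, 4} := by decide
    have hmu4 : μ 4 = 0 := by
      have : (4:ℕ) = 2 ^ 2 := by norm_num
      rw [this, ArithmeticFunction.moebius_apply_prime_pow Nat.prime_two (by norm_num)]
      norm_num
    have hmu2 : μ 2 = -1 := ArithmeticFunction.moebius_apply_prime Nat.prime_two
    have hmu1 : μ 1 = 1 := ArithmeticFunction.moebius_apply_one
    rw [hdiv]
    norm_num [Finset.sum_insert, Finset.mem_insert, Finset.mem_singleton, hmu4, hmu2, hmu1]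
    have h4 : Real.sqrt 3 ^ 4 = 9 := by
      have : Real.sqrt 3 ^ 4 = (Real.sqrt 3 ^ 2) ^ 2 := by ring
      rw [this, sqrt3_sq]; norm_num
    have h5 : (Real.sqrt 3 / 2) ^ 4 = 9 / 16 := by rw [div_pow, h4]; norm_num
    rw [h4, h5]; norm_num
  · -- general case
    have hp1 : 1 ≤ p := by omega
    have hQ := Q_of p hp hp4
    unfold Qprop at hQ
    set a := Real.sqrt 3 with ha
    set m := p / 2 with hm
    set T3 := ∑ d ∈ Finset.Icc 1 m, a ^ d with hT3
    have h2p : (0:ℝ) < 2 ^ p := by positivity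
    have hapnn : (0:ℝ) ≤ a ^ p := by positivity
    -- bounds on the two divisor sums
    have hb3 : ∑ d ∈ p.divisors, (μ (p / d) : ℝ) * a ^ d ≤ a ^ p + T3 := by
      rw [sum_split p hp1]
      have := tail_bound p hp1 a sqrt3_pos.le
      have h := le_abs_self (∑ d ∈ p.divisors.erase p, (μ (p / d) : ℝ) * a ^ d)
      linarith
    have hb2 : (2:ℝ) ^ p - (2 ^ (m + 1) - 2) ≤ ∑ d ∈ p.divisors, (μ (p / d) : ℝ) * 2 ^ d := by
      rw [sum_split p hp1]
      have h1 := tail_bound p hp1 2 (by norm_num)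
      rw [two_geom] at h1
      have h2 := neg_abs_le (∑ d ∈ p.divisors.erase p, (μ (p / d) : ℝ) * 2 ^ d)
      linarith
    -- the key strict inequality without the 1/p factor
    have hkey : ∑ d ∈ p.divisors, (μ (p / d) : ℝ) * a ^ d
        < 2 * (a / 2) ^ p * ∑ d ∈ p.divisors, (μ (p / d) : ℝ) * 2 ^ d := by
      have hpos : (0:ℝ) < 2 * (a / 2) ^ p := by positivity
      have hstep : 2 * (a / 2) ^ p * ((2:ℝ) ^ p - (2 ^ (m + 1) - 2))
          ≤ 2 * (a / 2) ^ p * ∑ d ∈ p.divisors, (μ (p / d) : ℝ) * 2 ^ d :=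
        mul_le_mul_of_nonneg_left hb2 hpos.le
      have heq : 2 * (a / 2) ^ p * ((2:ℝ) ^ p - (2 ^ (m + 1) - 2))
          = 2 * a ^ p - a ^ p * (2 ^ (m + 2) - 4) / 2 ^ p := by
        rw [div_pow]
        have e1 : (2:ℝ) ^ (m + 2) = 4 * 2 ^ m := by rw [pow_add]; ring
        have e2 : (2:ℝ) ^ (m + 1) = 2 * 2 ^ m := by rw [pow_add]; ring
        rw [e1, e2]
        field_simp
        ring
      calc ∑ d ∈ p.divisors, (μ (p / d) : ℝ) * a ^ d ≤ a ^ p + T3 := hb3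
        _ < 2 * a ^ p - a ^ p * (2 ^ (m + 2) - 4) / 2 ^ p := by linarith
        _ = 2 * (a / 2) ^ p * ((2:ℝ) ^ p - (2 ^ (m + 1) - 2)) := heq.symm
        _ ≤ _ := hstep
    calc (1 / (p : ℝ)) * ∑ d ∈ p.divisors, (μ (p / d) : ℝ) * a ^ d
        < (1 / (p : ℝ)) * (2 * (a / 2) ^ p * ∑ d ∈ p.divisors, (μ (p / d) : ℝ) * 2 ^ d) :=
          mul_lt_mul_of_pos_left hkey hp0
      _ = 2 * (a / 2) ^ p * ((1 / (p : ℝ)) * ∑ d ∈ p.divisors, (μ (p / d) : ℝ) * 2 ^ d) := by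
          ring
end
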